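/- arXiv:1507.06572 — 4 statements merged into one kernel-verified Lean document; each statement's English description precedes it below -/
import Mathlib

section
/- Let G be a module over Z_p (the integers localized at a prime p), let S be a nice submodule of G, and let K be a submodule of G containing S such that K/S is finitely generated and torsion. Then K is a nice submodule of G. -/
noncomputable section

namespace UlmW

universe u

variable {R : Type*} [CommRing R]

/-- The submodule `p^α M`, defined by transfinite recursion on `α`. -/
def ppow {M : Type u} [AddCommGroup M] [Module R M] (p : R) (α : Ordinal.{u}) :
    Submodule R M :=
  Ordinal.limitRecOn α ⊤ (fun _ S => Submodule.map (LinearMap.lsmul R M p) S)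
    fun β _ ih => ⨅ (γ : Set.Iio β), ih γ.1 γ.2

open scoped Classical in
/-- The `p`-height of `x`, with `⊤` playing the role of `∞`. -/
def pheight {M : Type u} [AddCommGroup M] [Module R M] (p : R) (x : M) :
    WithTop Ordinal.{u} :=
  if h : ∃ α : Ordinal.{u}, x ∈ ppow p α ∧ x ∉ ppow p (α + 1) then (h.choose : WithTop Ordinal)
  else ⊤

/-- `H⁰ = {x : ∃ a ≠ 0, a • x ∈ H}`. -/
def hull {M : Type u} [AddCommGroup M] [Module R M] (H : Submodule R M) : Set M :=
  {x | ∃ a : R, a ≠ 0 ∧ a • x ∈ H}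

/-- `X` is a decomposition set with respect to the single prime `p`. -/
def IsDecompWrt {M : Type u} [AddCommGroup M] [Module R M] (p : R) (X : Set M) : Prop :=
  (LinearIndependent R (fun x : X => (x : M))) ∧
  (∀ x ∈ X, ∀ a : R, a ≠ 0 → a • x ≠ 0) ∧
  (∀ s : Finset M, ↑s ⊆ X → ∀ c : M → R,
    pheight p (∑ x ∈ s, c x • x) = s.inf fun x => pheight p (c x • x))

/-- `X` is a decomposition set (with respect to every prime of `R`). -/
def IsDecompositionSet (R : Type*) [CommRing R] {M : Type u} [AddCommGroup M] [Module R M]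
    (X : Set M) : Prop :=
  ∀ p : R, Prime p → IsDecompWrt p X

/-- partial decomposition basis, heights taken w.r.t. a fixed prime `p`. -/
def IsPDBWrt {M : Type u} [AddCommGroup M] [Module R M] (p : R) (C : Set (Set M)) : Prop :=
  C.Nonempty ∧ (∀ X ∈ C, X.Finite) ∧ (∀ X ∈ C, IsDecompWrt p X) ∧
  ∀ X ∈ C, ∀ x : M, ∃ Y ∈ C, X ⊆ Y ∧ x ∈ hull (Submodule.span R Y)

/-- partial decomposition basis (heights w.r.t. all primes of `R`). -/
def IsPDB (R : Type*) [CommRing R] {M : Type u} [AddCommGroup M] [Module R M] (C : Set (Set M)) : Prop :=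
  C.Nonempty ∧ (∀ X ∈ C, X.Finite) ∧ (∀ X ∈ C, IsDecompositionSet R X) ∧
  ∀ X ∈ C, ∀ x : M, ∃ Y ∈ C, X ⊆ Y ∧ x ∈ hull (Submodule.span R Y)

/-- A partial isomorphism system `I : G ≅_p H`. -/
def IsPartialIsoSystem {M N : Type*} [AddCommGroup M] [Module R M]
    [AddCommGroup N] [Module R N] (I : Set (M →ₗ.[R] N)) : Prop :=
  I.Nonempty ∧
  (∀ f ∈ I, Function.Injective f.toFun) ∧
  (∀ f ∈ I, ∀ a : M, ∃ g ∈ I, f ≤ g ∧ a ∈ g.domain) ∧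
  (∀ f ∈ I, ∀ b : N, ∃ g ∈ I, f ≤ g ∧ ∃ y : g.domain, g y = b)

/-- The Ulm sequence of `x`: `U(x) = (|pⁱ x|)ᵢ`. -/
def UlmSeqOf {M : Type u} [AddCommGroup M] [Module R M] (p : R) (x : M) :
    ℕ → WithTop Ordinal.{u} :=
  fun i => pheight p ((p ^ i) • x)

/-- `u` is an Ulm sequence. -/
def IsUlmSeq (u : ℕ → WithTop Ordinal.{u}) : Prop :=
  ∀ i, (u i = ⊤ → u (i + 1) = ⊤) ∧ (u i ≠ ⊤ → u i < u (i + 1))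

/-- Equivalence of Ulm sequences. -/
def UlmEquiv (u v : ℕ → WithTop Ordinal.{u}) : Prop :=
  ∃ m n : ℕ, ∀ i, u (i + n) = v (i + m)

/-- `X` contains at least `n` elements whose Ulm sequence is equivalent to `u`. -/
def HasAtLeast {M : Type u} [AddCommGroup M] [Module R M] (p : R)
    (u : ℕ → WithTop Ordinal.{u}) (n : ℕ) (X : Set M) : Prop :=
  ∃ s : Finset M, ↑s ⊆ X ∧ n ≤ s.card ∧ ∀ x ∈ s, UlmEquiv (UlmSeqOf p x) u

/-- `ŵ_C(e,G)` where `e` is the class of the Ulm sequence `u`. -/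
def wHat {M : Type u} [AddCommGroup M] [Module R M] (p : R) (C : Set (Set M))
    (u : ℕ → WithTop Ordinal.{u}) : ℕ∞ :=
  sSup {N : ℕ∞ | ∃ n : ℕ, N = (n : ℕ∞) ∧ ∃ X ∈ C, HasAtLeast p u n X}

/-- `x` is proper with respect to `S`. -/
def IsProper {M : Type u} [AddCommGroup M] [Module R M] (p : R) (S : Submodule R M)
    (x : M) : Prop :=
  ∀ s ∈ S, pheight p (x + s) ≤ pheight p x

/-- `H` is a nice submodule. -/
def IsNice {M : Type u} [AddCommGroup M] [Module R M] (p : R) (H : Submodule R M) : Prop :=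
  ∀ x : M, ∃ h ∈ H, ∀ h' ∈ H, pheight p (x + h') ≤ pheight p (x + h)

/-- The Ulm invariant `u_p(σ, M)`: the dimension of `(p^σ M)[p]/(p^{σ+1} M)[p]`
over the residue field `R/(p)`. -/
def uCard (p : R) (M : Type u) [AddCommGroup M] [Module R M] (σ : Ordinal.{u}) :
    Cardinal :=
  let V : Submodule R M := ppow p σ ⊓ Submodule.torsionBy R M p
  let W : Submodule R V := (ppow p (σ + 1) ⊓ Submodule.torsionBy R M p).comap V.subtype
  Module.rank (R ⧸ Ideal.span {p})
    ((V ⧸ W) ⧸ (Ideal.span {p} • (⊤ : Submodule R (V ⧸ W))))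

/-- `û_p(σ, M) = min (u_p(σ, M), ω)`. -/
def uHat (p : R) (M : Type u) [AddCommGroup M] [Module R M] (σ : Ordinal.{u}) : Cardinal :=
  min (uCard p M σ) Cardinal.aleph0

/-- `û_p(∞, M) = min (dim (p^∞ M)[p], ω)`. -/
def uHatInf (p : R) (M : Type u) [AddCommGroup M] [Module R M] : Cardinal :=
  let V : Submodule R M := (⨅ α : Ordinal.{u}, ppow p α) ⊓ Submodule.torsionBy R M p
  min (Module.rank (R ⧸ Ideal.span {p})
    (V ⧸ (Ideal.span {p} • (⊤ : Submodule R V)))) Cardinal.aleph0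

end UlmW

open UlmW

/-- The ideal `(p) ⊆ ℤ` is prime. -/
instance zpSpanPrime (p : ℤ) [hp : Fact (Prime p)] : (Ideal.span {p} : Ideal ℤ).IsPrime :=
  (Ideal.span_singleton_prime hp.out.ne_zero).mpr hp.out

/-- `ℤ_(p)`, the integers localized at the prime `p`. -/
abbrev Zp (p : ℤ) [Fact (Prime p)] : Type :=
  Localization.AtPrime (Ideal.span {p} : Ideal ℤ)


universe u

open UlmW

section Aux

variable (p : ℤ) [Fact (Prime p)]

/-- Every nonzero element of `Zp p` has a nonzero integer multiple hitting the image of ℤ: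
any `Zp`-annihilated element is ℤ-annihilated. -/
theorem zp_int_ann {Q : Type*} [AddCommGroup Q] [Module (Zp p) Q]
    (z : Q) (a : Zp p) (ha : a ≠ 0) (haz : a • z = 0) :
    ∃ r : ℤ, r ≠ 0 ∧ ((r : Zp p)) • z = 0 := by
  obtain ⟨⟨r, s⟩, hmk⟩ :=
    IsLocalization.mk'_surjective (Ideal.span {p} : Ideal ℤ).primeCompl a
  have hs : IsUnit (algebraMap ℤ (Zp p) ↑s) :=
    IsLocalization.map_units (Zp p) s
  have heq : (algebraMap ℤ (Zp p)) r = a * algebraMap ℤ (Zp p) ↑s := by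
    rw [← hmk, IsLocalization.mk'_spec]
  refine ⟨r, ?_, ?_⟩
  · intro h0
    rw [h0, map_zero] at heq
    exact ha ((hs.mul_left_eq_zero).mp heq.symm)
  · have : (algebraMap ℤ (Zp p)) r • z = 0 := by
      rw [heq, mul_comm, mul_smul, haz, smul_zero]
    rwa [eq_intCast (algebraMap ℤ (Zp p)) r] at this

/-- scalar action on a torsion element is an integer action -/
theorem zp_smul_int {Q : Type*} [AddCommGroup Q] [Module (Zp p) Q]
    (z : Q) (hz : ∃ r : ℤ, r ≠ 0 ∧ ((r : Zp p)) • z = 0) (c : Zp p) :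
    ∃ m : ℤ, c • z = ((m : Zp p)) • z := by
  obtain ⟨r, hr0, hrz⟩ := hz
  set f := algebraMap ℤ (Zp p) with hfdef
  have hq : p.natAbs.Prime := Int.prime_iff_natAbs_prime.mp Fact.out
  set q : ℕ := p.natAbs with hqdef
  have hm : r.natAbs ≠ 0 := Int.natAbs_ne_zero.mpr hr0
  set n : ℕ := r.natAbs.factorization q with hndef
  set u : ℕ := r.natAbs / q ^ n with hudef
  have hqu : ¬ q ∣ u := Nat.not_dvd_ordCompl hq hm
  have hfact : q ^ n * u = r.natAbs := Nat.ordProj_mul_ordCompl_eq_self r.natAbs q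
  -- natAbs annihilates
  have hnatann0 : (((r.natAbs : ℤ) : Zp p)) • z = 0 := by
    rcases Int.natAbs_eq r with h | h
    · rw [← h]; exact hrz
    · have : ((r.natAbs : ℤ) : Zp p) = -(r : Zp p) := by
        rw [show (r.natAbs : ℤ) = -r by omega]; push_cast; ring
      rw [this, neg_smul, hrz, neg_zero]
  have hnatann : f ((r.natAbs : ℕ) : ℤ) • z = 0 := by
    rw [hfdef, eq_intCast]; exact hnatann0
  have hfactann : f ((q : ℤ) ^ n * (u : ℤ)) • z = 0 := by
    rw [show ((q : ℤ) ^ n * (u : ℤ)) = ((r.natAbs : ℕ) : ℤ) from by exact_mod_cast hfact]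
    exact hnatann
  -- u is a unit in Zp
  have hpu : ¬ p ∣ (u : ℤ) := by
    intro h
    exact hqu (Int.natCast_dvd_natCast.mp (Int.natAbs_dvd.mpr h))
  have humem : (u : ℤ) ∈ (Ideal.span {p} : Ideal ℤ).primeCompl := by
    intro h
    exact hpu (Ideal.mem_span_singleton.mp h)
  have huunit : IsUnit (f (u : ℤ)) :=
    IsLocalization.map_units (Zp p) (⟨(u : ℤ), humem⟩ : (Ideal.span {p} : Ideal ℤ).primeCompl)
  obtain ⟨tinv, htinv⟩ : ∃ tv : Zp p, tv * f (u : ℤ) = 1 :=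
    ⟨↑huunit.unit⁻¹, huunit.unit.inv_mul⟩
  have h5 : tinv * f ((q : ℤ) ^ n * (u : ℤ)) = f ((q : ℤ) ^ n) := by
    rw [map_mul, mul_comm (f ((q : ℤ) ^ n)) (f (u : ℤ)), ← mul_assoc, htinv, one_mul]
  have hwn : f ((q : ℤ) ^ n) • z = 0 := by
    rw [← h5, mul_smul, hfactann, smul_zero]
  -- write c = mk' d s
  obtain ⟨⟨d, s⟩, hmk⟩ :=
    IsLocalization.mk'_surjective (Ideal.span {p} : Ideal ℤ).primeCompl c
  have hps : ¬ p ∣ (↑s : ℤ) := fun h => s.2 (Ideal.mem_span_singleton.mpr h)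
  have hqs : ¬ (q : ℤ) ∣ (↑s : ℤ) := fun h => hps (Int.natAbs_dvd.mp h)
  have hcop : IsCoprime ((q : ℤ) ^ n) (↑s : ℤ) :=
    ((Nat.prime_iff_prime_int.mp hq).coprime_iff_not_dvd.mpr hqs).pow_left
  obtain ⟨a, b, hab⟩ := hcop
  have hcs : c * f ↑s = f d := by
    rw [hfdef, ← hmk, IsLocalization.mk'_spec]
  refine ⟨b * d, ?_⟩
  have hone : f a * f ((q : ℤ) ^ n) + f b * f ↑s = 1 := by
    rw [← map_mul, ← map_mul, ← map_add, hab, map_one]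
  calc c • z = ((f a * f ((q : ℤ) ^ n) + f b * f ↑s) * c) • z := by rw [hone, one_mul]
    _ = (f a * c) • (f ((q : ℤ) ^ n) • z) + (f b) • ((c * f ↑s) • z) := by
        rw [← mul_smul, ← mul_smul, ← add_smul]
        congr 1
        ring
    _ = (f b) • (f d • z) := by rw [hwn, smul_zero, zero_add, hcs]
    _ = (((b * d : ℤ) : Zp p)) • z := by rw [← mul_smul, ← map_mul, hfdef, eq_intCast]

end Aux


theorem statement_10 (p : ℤ) [Fact (Prime p)] {G : Type u} [AddCommGroup G]
    [Module (Zp p) G]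
    (S K : Submodule (Zp p) G) (hSK : S ≤ K) (hS : IsNice (p : Zp p) S)
    (hfg : Module.Finite (Zp p) (↥K ⧸ S.comap K.subtype))
    (htor : ∀ z : ↥K ⧸ S.comap K.subtype, ∃ a : Zp p, a ≠ 0 ∧ a • z = 0) :
    IsNice (p : Zp p) K := by
  classical
  set S' := S.comap K.subtype with hS'def
  have hann : ∀ z : ↥K ⧸ S', ∃ r : ℤ, r ≠ 0 ∧ ((r : Zp p)) • z = 0 := by
    intro z; obtain ⟨a, ha, haz⟩ := htor z; exact zp_int_ann p z a ha haz
  obtain ⟨t, htspan⟩ := hfg.fg_top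
  have hZspan : ∀ z : ↥K ⧸ S', z ∈ Submodule.span ℤ (↑t : Set (↥K ⧸ S')) := by
    intro z
    have hz : z ∈ Submodule.span (Zp p) (↑t : Set (↥K ⧸ S')) := htspan ▸ Submodule.mem_top
    induction hz using Submodule.span_induction with
    | mem y h => exact Submodule.subset_span h
    | zero => exact Submodule.zero_mem _
    | add y w _ _ hy hw => exact Submodule.add_mem _ hy hw
    | smul c y _ hy =>
        obtain ⟨m, hm⟩ := zp_smul_int p y (hann y) c
        rw [hm, Int.cast_smul_eq_zsmul]
        exact Submodule.smul_mem _ m hy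
  haveI : Module.Finite ℤ (↥K ⧸ S') := ⟨⟨t, Submodule.eq_top_iff'.mpr hZspan⟩⟩
  have htors : Module.IsTorsion ℤ (↥K ⧸ S') := by
    intro z
    obtain ⟨r, hr0, hrz⟩ := hann z
    refine ⟨⟨r, mem_nonZeroDivisors_of_ne_zero hr0⟩, ?_⟩
    show r • z = 0
    rw [← Int.cast_smul_eq_zsmul (Zp p)]
    exact hrz
  haveI : Finite (↥K ⧸ S') := Module.finite_of_fg_torsion _ htors
  intro x
  have hmks : Function.Surjective (Submodule.Quotient.mk (p := S')) :=
    Submodule.Quotient.mk_surjective _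
  choose rep hrep using hmks
  choose sq hsqS hsq using fun q : ↥K ⧸ S' => hS (x + ↑(rep q))
  haveI : Nonempty (↥K ⧸ S') := ⟨0⟩
  obtain ⟨q₀, hq₀⟩ := Finite.exists_max
    (fun qq : ↥K ⧸ S' => pheight (p : Zp p) (x + ↑(rep qq) + sq qq))
  refine ⟨↑(rep q₀) + sq q₀, K.add_mem (rep q₀).2 (hSK (hsqS q₀)), ?_⟩
  intro h' hh'
  set qq := Submodule.Quotient.mk (p := S') (⟨h', hh'⟩ : ↥K) with hqq
  have hdiff : h' - ↑(rep qq) ∈ S := by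
    have h1 : ((⟨h', hh'⟩ : ↥K) - rep qq) ∈ S' := by
      rw [← Submodule.Quotient.eq]
      rw [← hqq]
      exact (hrep qq).symm
    simpa [hS'def] using h1
  have e : x + h' = x + ↑(rep qq) + (h' - ↑(rep qq)) := by abel
  calc pheight (p : Zp p) (x + h')
      ≤ pheight (p : Zp p) (x + ↑(rep qq) + sq qq) := by rw [e]; exact hsq qq _ hdiff
    _ ≤ pheight (p : Zp p) (x + ↑(rep q₀) + sq q₀) := hq₀ qq
    _ = pheight (p : Zp p) (x + (↑(rep q₀) + sq q₀)) := by rw [add_assoc]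

end
end

section
/- Let G be a module over Z_p (the integers localized at a prime p), X a decomposition basis for G, and S a finitely generated submodule of G such that S ∩ ⟨X⟩ = ⟨S ∩ X⟩. Then for every y ∈ X with y ∉ S, there is an n ∈ ω such that for all r ∈ Z_p and all s ∈ S, |r pⁿ y + s| = min{ |r pⁿ y|, |s| }. -/
noncomputable section

open UlmW

universe u

open UlmW
section Aux

namespace UlmW

variable {R : Type*} [CommRing R] {M : Type u} [AddCommGroup M] [Module R M]

theorem ppow_zero (p : R) : ppow (M := M) p 0 = ⊤ := by
  unfold ppow; rw [Ordinal.limitRecOn_zero]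

theorem ppow_succ (p : R) (α : Ordinal.{u}) :
    ppow (M := M) p (α + 1) = Submodule.map (LinearMap.lsmul R M p) (ppow p α) := by
  unfold ppow; rw [Ordinal.add_one_eq_succ, Ordinal.limitRecOn_succ]

theorem ppow_limit (p : R) {α : Ordinal.{u}} (h : Order.IsSuccLimit α) :
    ppow (M := M) p α = ⨅ γ : Set.Iio α, ppow p γ.1 := by
  unfold ppow; rw [Ordinal.limitRecOn_limit _ _ _ _ h]

theorem ppow_succ_le (p : R) (α : Ordinal.{u}) : ppow (M := M) p (α + 1) ≤ ppow p α := by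
  rw [ppow_succ]
  rintro x ⟨z, hz, rfl⟩
  exact Submodule.smul_mem _ _ hz

theorem ppow_anti (p : R) {α β : Ordinal.{u}} (h : α ≤ β) :
    ppow (M := M) p β ≤ ppow p α := by
  induction β using Ordinal.induction with
  | _ β ih =>
    rcases eq_or_lt_of_le h with rfl | hlt
    · exact le_rfl
    rcases Ordinal.zero_or_succ_or_isSuccLimit β with rfl | ⟨γ, rfl⟩ | hβ
    · exact absurd hlt (not_lt_zero (a := α))
    · rw [← Ordinal.add_one_eq_succ]
      exact (ppow_succ_le p γ).trans (ih γ (Order.lt_succ γ) (Order.lt_succ_iff.mp hlt))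
    · rw [ppow_limit p hβ]
      exact iInf_le _ (⟨α, hlt⟩ : Set.Iio β)

theorem smul_mem_ppow_succ (p : R) {x : M} {α : Ordinal.{u}} (hx : x ∈ ppow p α) :
    p • x ∈ ppow p (α + 1) := by
  rw [ppow_succ]
  exact ⟨x, hx, rfl⟩

theorem mem_ppow_all_of_not_exists (p : R) {x : M}
    (h : ¬ ∃ α : Ordinal.{u}, x ∈ ppow p α ∧ x ∉ ppow p (α + 1)) :
    ∀ α : Ordinal.{u}, x ∈ ppow p α := by
  push_neg at h
  intro α
  induction α using Ordinal.induction with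
  | _ α ih =>
    rcases Ordinal.zero_or_succ_or_isSuccLimit α with rfl | ⟨γ, rfl⟩ | hα
    · rw [ppow_zero]; trivial
    · rw [← Ordinal.add_one_eq_succ]
      exact h γ (ih γ (Order.lt_succ γ))
    · rw [ppow_limit p hα, Submodule.mem_iInf]
      exact fun γ => ih γ.1 γ.2

theorem pheight_eq_top_iff (p : R) (x : M) :
    pheight p x = ⊤ ↔ ∀ α : Ordinal.{u}, x ∈ ppow p α := by
  constructor
  · intro h
    by_cases hce : ∃ α : Ordinal.{u}, x ∈ ppow p α ∧ x ∉ ppow p (α + 1)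
    · rw [pheight, dif_pos hce] at h
      exact absurd h WithTop.coe_ne_top
    · exact mem_ppow_all_of_not_exists p hce
  · intro h
    have hce : ¬ ∃ α : Ordinal.{u}, x ∈ ppow p α ∧ x ∉ ppow p (α + 1) := by
      rintro ⟨α, -, h2⟩; exact h2 (h _)
    rw [pheight, dif_neg hce]

theorem le_pheight_iff {p : R} {x : M} {α : Ordinal.{u}} :
    (α : WithTop Ordinal.{u}) ≤ pheight p x ↔ x ∈ ppow p α := by
  by_cases hce : ∃ β : Ordinal.{u}, x ∈ ppow p β ∧ x ∉ ppow p (β + 1)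
  · have hspec := hce.choose_spec
    rw [pheight, dif_pos hce, WithTop.coe_le_coe]
    constructor
    · intro h; exact ppow_anti p h hspec.1
    · intro hmem
      by_contra hlt
      push_neg at hlt
      have hsucc : hce.choose + 1 ≤ α := by
        rw [Ordinal.add_one_eq_succ]; exact Order.succ_le_of_lt hlt
      exact hspec.2 (ppow_anti p hsucc hmem)
  · rw [pheight, dif_neg hce]
    simp only [le_top, true_iff]
    exact mem_ppow_all_of_not_exists p hce _

theorem le_of_forall_coe_le {μ ν : WithTop Ordinal.{u}}
    (h : ∀ α : Ordinal.{u}, (α : WithTop Ordinal.{u}) ≤ μ → (α : WithTop Ordinal.{u}) ≤ ν) :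
    μ ≤ ν := by
  induction μ using WithTop.recTopCoe with
  | top =>
    induction ν using WithTop.recTopCoe with
    | top => exact le_rfl
    | coe β =>
      have h2 := h (β + 1) le_top
      rw [WithTop.coe_le_coe, Ordinal.add_one_eq_succ] at h2
      exact absurd h2 (Order.lt_succ β).not_ge
  | coe β => exact h β le_rfl

theorem pheight_zero (p : R) : pheight p (0 : M) = ⊤ :=
  (pheight_eq_top_iff p 0).mpr fun _ => Submodule.zero_mem _

theorem min_le_pheight_add (p : R) (x z : M) :
    min (pheight p x) (pheight p z) ≤ pheight p (x + z) := by
  apply le_of_forall_coe_le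
  intro α hα
  rw [le_min_iff] at hα
  rw [le_pheight_iff]
  exact Submodule.add_mem _ (le_pheight_iff.mp hα.1) (le_pheight_iff.mp hα.2)

theorem le_pheight_smul (p c : R) (x : M) : pheight p x ≤ pheight p (c • x) := by
  apply le_of_forall_coe_le
  intro α hα
  rw [le_pheight_iff] at *
  exact Submodule.smul_mem _ _ hα

theorem pheight_unit_smul (p : R) {c : R} (hc : IsUnit c) (x : M) :
    pheight p (c • x) = pheight p x := by
  obtain ⟨u, rfl⟩ := hc
  refine le_antisymm ?_ (le_pheight_smul p _ x)
  have hx : x = (↑u⁻¹ : R) • ((u : R) • x) := by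
    rw [smul_smul, Units.inv_mul, one_smul]
  conv_rhs => rw [hx]
  exact le_pheight_smul p _ _

theorem pheight_neg (p : R) (x : M) : pheight p (-x) = pheight p x := by
  have := pheight_unit_smul p (M := M) (c := -1) (IsUnit.neg isUnit_one) x
  rwa [neg_smul, one_smul] at this

theorem min_le_pheight_sub (p : R) (x z : M) :
    min (pheight p x) (pheight p z) ≤ pheight p (x - z) := by
  rw [sub_eq_add_neg]
  have := min_le_pheight_add p x (-z)
  rwa [pheight_neg] at this

end UlmW

end Aux
section Aux2

namespace UlmW

variable {R : Type*} [CommRing R] {M : Type u} [AddCommGroup M] [Module R M]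

/-- Heights strictly increase along powers, as long as they are not `⊤`. -/
theorem pheight_pow_smul_lt {p : R} {x : M} {k k' : ℕ} (hkk' : k < k')
    (h : pheight p ((p ^ k) • x) ≠ ⊤) :
    pheight p ((p ^ k) • x) < pheight p ((p ^ k') • x) := by
  obtain ⟨α, hα⟩ := WithTop.ne_top_iff_exists.mp h
  have hmem : (p ^ k) • x ∈ ppow p α := le_pheight_iff.mp hα.le
  have h1 : p • ((p ^ k) • x) ∈ ppow p (α + 1) := smul_mem_ppow_succ p hmem
  have h2 : (p ^ k') • x = (p ^ (k' - (k + 1))) • (p • ((p ^ k) • x)) := by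
    rw [smul_smul, smul_smul, mul_assoc, ← pow_succ', ← pow_add, Nat.sub_add_cancel hkk']
  have h3 : (p ^ k') • x ∈ ppow p (α + 1) := by
    rw [h2]; exact Submodule.smul_mem _ _ h1
  have h4 : ((α + 1 : Ordinal.{u}) : WithTop Ordinal.{u}) ≤ pheight p ((p ^ k') • x) :=
    le_pheight_iff.mpr h3
  refine lt_of_lt_of_le ?_ h4
  rw [← hα, WithTop.coe_lt_coe, Ordinal.add_one_eq_succ]
  exact Order.lt_succ α

/-- If `|x| < |z|` then `|x - z| ≤ |x|`. -/
theorem pheight_sub_le {p : R} {x z : M} (h : pheight p x < pheight p z) :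
    pheight p (x - z) ≤ pheight p x := by
  by_contra hc
  push_neg at hc
  have h2 := min_le_pheight_add p (x - z) z
  rw [sub_add_cancel] at h2
  exact absurd h2 (not_le_of_gt (lt_min hc h))

end UlmW

end Aux2
section Aux3

theorem int_fac {p : ℤ} (hp : Prime p) {n : ℤ} (hn : n ≠ 0) :
    ∃ (j : ℕ) (m : ℤ), ¬ p ∣ m ∧ n = p ^ j * m := by
  obtain ⟨t, ht, h⟩ := (FiniteMultiplicity.of_prime_left hp hn).exists_eq_pow_mul_and_not_dvd
  exact ⟨_, t, h, ht⟩

variable (p : ℤ) [hp : Fact (Prime p)]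

theorem zp_coe_eq (z : ℤ) : algebraMap ℤ (Zp p) z = (z : Zp p) := by
  rw [eq_intCast]

theorem zp_isUnit {t : ℤ} (ht : ¬ p ∣ t) : IsUnit ((t : ℤ) : Zp p) := by
  have h1 : t ∈ (Ideal.span {p} : Ideal ℤ).primeCompl :=
    fun hmem => ht (Ideal.mem_span_singleton.mp hmem)
  have h2 := IsLocalization.map_units (Zp p) (⟨t, h1⟩ : (Ideal.span {p} : Ideal ℤ).primeCompl)
  rwa [zp_coe_eq] at h2

theorem zp_unit_pow {a : Zp p} (ha : a ≠ 0) :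
    ∃ (j : ℕ) (u : Zp p), IsUnit u ∧ a = u * (p : Zp p) ^ j := by
  obtain ⟨⟨x, t⟩, hxt⟩ := IsLocalization.surj (Ideal.span {p} : Ideal ℤ).primeCompl a
  rw [zp_coe_eq, zp_coe_eq] at hxt
  have htd : ¬ p ∣ (t : ℤ) := fun hd => t.2 (Ideal.mem_span_singleton.mpr hd)
  obtain ⟨w, hw⟩ := zp_isUnit p htd
  have hx0 : x ≠ 0 := by
    rintro rfl
    apply ha
    rw [Int.cast_zero] at hxt
    calc a = a * ((w : Zp p) * ((w⁻¹ : (Zp p)ˣ) : Zp p)) := by rw [Units.mul_inv, mul_one]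
    _ = (a * ((t : ℤ) : Zp p)) * ((w⁻¹ : (Zp p)ˣ) : Zp p) := by rw [hw]; ring
    _ = 0 := by rw [hxt]; ring
  obtain ⟨j, x', hx', rfl⟩ := int_fac hp.out hx0
  obtain ⟨v, hv⟩ := zp_isUnit p hx'
  refine ⟨j, (v : Zp p) * ((w⁻¹ : (Zp p)ˣ) : Zp p), (v.isUnit.mul (w⁻¹).isUnit), ?_⟩
  have h2 : a * ((t : ℤ) : Zp p) = (p : Zp p) ^ j * ((x' : ℤ) : Zp p) := by
    rw [hxt]; push_cast; ring
  calc a = a * ((w : Zp p) * ((w⁻¹ : (Zp p)ˣ) : Zp p)) := by rw [Units.mul_inv, mul_one]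
  _ = (a * ((t : ℤ) : Zp p)) * ((w⁻¹ : (Zp p)ˣ) : Zp p) := by rw [hw]; ring
  _ = ((v : Zp p) * ((w⁻¹ : (Zp p)ˣ) : Zp p)) * (p : Zp p) ^ j := by rw [h2, hv]; ring

theorem zp_residue (Mn : ℕ) (a : Zp p) :
    ∃ c : ℕ, c < p.natAbs ^ Mn ∧ ∃ b : Zp p, a = (c : Zp p) + (p : Zp p) ^ Mn * b := by
  obtain ⟨⟨x, t⟩, hxt⟩ := IsLocalization.surj (Ideal.span {p} : Ideal ℤ).primeCompl a
  rw [zp_coe_eq, zp_coe_eq] at hxt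
  have htd : ¬ p ∣ (t : ℤ) := fun hd => t.2 (Ideal.mem_span_singleton.mpr hd)
  have hcop : IsCoprime (p ^ Mn) ((t : ℤ)) :=
    ((Prime.coprime_iff_not_dvd hp.out).mpr htd).pow_left
  obtain ⟨e, f, hef⟩ := hcop
  set Q : ℕ := p.natAbs ^ Mn with hQdef
  set z : ℤ := f * x with hzdef
  have hQpos : 0 < (Q : ℤ) := by
    have : p.natAbs ≠ 0 := Int.natAbs_ne_zero.mpr hp.out.ne_zero
    positivity
  have hc0 : 0 ≤ z % (Q : ℤ) := Int.emod_nonneg z (ne_of_gt hQpos)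
  have hclt : z % (Q : ℤ) < Q := Int.emod_lt_of_pos z hQpos
  have hdvd : (p : ℤ) ^ Mn ∣ (Q : ℤ) := by
    have hQ : ((Q : ℕ) : ℤ) = |p| ^ Mn := by
      rw [hQdef]; push_cast [Int.natCast_natAbs]; ring
    rcases abs_choice p with h | h
    · rw [hQ, h]
    · rw [hQ, h]; exact ⟨(-1) ^ Mn, by ring⟩
  obtain ⟨w, hwQ⟩ := hdvd
  have h3 : p ^ Mn * w * (z / (Q : ℤ)) + z % (Q : ℤ) = z := by
    rw [← hwQ]; exact Int.mul_ediv_add_emod z (Q : ℤ)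
  refine ⟨(z % (Q : ℤ)).toNat, by omega, (e : Zp p) * a + (w : Zp p) * ((z / (Q : ℤ) : ℤ) : Zp p), ?_⟩
  have hcast : (((z % (Q : ℤ)).toNat : ℕ) : Zp p) = ((z % (Q : ℤ) : ℤ) : Zp p) := by
    rw [← Int.cast_natCast, Int.toNat_of_nonneg hc0]
  rw [hcast]
  have h2 : (e : Zp p) * (p : Zp p) ^ Mn + (f : Zp p) * ((t : ℤ) : Zp p) = 1 := by
    have h2' := congrArg (fun n : ℤ => (n : Zp p)) hef
    push_cast at h2'
    linear_combination h2'
  have h3' : (p : Zp p) ^ Mn * (w : Zp p) * ((z / (Q : ℤ) : ℤ) : Zp p)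
      + ((z % (Q : ℤ) : ℤ) : Zp p) = ((f : ℤ) : Zp p) * ((x : ℤ) : Zp p) := by
    have h3'' := congrArg (fun n : ℤ => (n : Zp p)) h3
    rw [hzdef] at h3''
    push_cast at h3''
    linear_combination h3''
  linear_combination (-a) * h2 + ((f : ℤ) : Zp p) * hxt - h3'

end Aux3

theorem statement_12 (p : ℤ) [Fact (Prime p)] {G : Type u} [AddCommGroup G]
    [Module (Zp p) G]
    (X : Set G) (hdec : IsDecompWrt (p : Zp p) X)
    (hbasis : ∀ g : G, ∃ a : Zp p, a ≠ 0 ∧ a • g ∈ Submodule.span (Zp p) X)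
    (S : Submodule (Zp p) G) (hfg : S.FG)
    (hSX : S ⊓ Submodule.span (Zp p) X = Submodule.span (Zp p) ((S : Set G) ∩ X))
    (y : G) (hy : y ∈ X) (hyS : y ∉ S) :
    ∃ n : ℕ, ∀ r : Zp p, ∀ s ∈ S,
      pheight (p : Zp p) ((r * (p : Zp p) ^ n) • y + s) =
        min (pheight (p : Zp p) ((r * (p : Zp p) ^ n) • y)) (pheight (p : Zp p) s) := by
  classical
  set q : Zp p := (p : Zp p) with hq
  set V : Submodule (Zp p) G := Submodule.span (Zp p) ((S : Set G) ∩ X) with hV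
  obtain ⟨F, hF⟩ := hfg
  have hFS : (F : Set G) ⊆ S := by rw [← hF]; exact Submodule.subset_span
  -- a uniform exponent Mn with q^Mn • g ∈ V for every generator g
  have hMg : ∀ g ∈ F, ∃ m : ℕ, (q ^ m) • g ∈ V := by
    intro g hg
    obtain ⟨a, ha0, haX⟩ := hbasis g
    obtain ⟨j, uu, huu, rfl⟩ := zp_unit_pow p ha0
    have h1 : (uu * q ^ j) • g ∈ S ⊓ Submodule.span (Zp p) X :=
      ⟨S.smul_mem _ (hFS hg), haX⟩
    rw [hSX] at h1
    obtain ⟨w, rfl⟩ := huu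
    refine ⟨j, ?_⟩
    have h2 : (q ^ j) • g = ((w⁻¹ : (Zp p)ˣ) : Zp p) • (((w : Zp p) * q ^ j) • g) := by
      rw [smul_smul, ← mul_assoc, Units.inv_mul, one_mul]
    rw [h2]
    exact V.smul_mem _ h1
  choose m hm using hMg
  set Mn : ℕ := F.attach.sup (fun g => m g.1 g.2) with hMn
  have hqM : ∀ g (hg : g ∈ F), (q ^ Mn) • g ∈ V := by
    intro g hg
    have hle : m g hg ≤ Mn := Finset.le_sup (f := fun g : ↑F => m g.1 g.2) (Finset.mem_attach F ⟨g, hg⟩)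
    have h2 : (q ^ Mn) • g = (q ^ (Mn - m g hg)) • ((q ^ (m g hg)) • g) := by
      rw [smul_smul, ← pow_add, Nat.sub_add_cancel hle]
    rw [h2]
    exact V.smul_mem _ (hm g hg)
  -- adding an element of V never increases the height of c • y
  have hcomb : ∀ (c : Zp p) (v : G), v ∈ V → pheight q (c • y + v) ≤ pheight q (c • y) := by
    intro c v hv
    obtain ⟨co, hsupp, hsum⟩ := Submodule.mem_span_set.mp hv
    have hyF : y ∉ co.support := fun hyF => hyS ((hsupp hyF).1)
    set F2 : Finset G := insert y co.support with hF2
    have hF2X : ↑F2 ⊆ X := by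
      rw [hF2, Finset.coe_insert]
      exact Set.insert_subset hy (hsupp.trans Set.inter_subset_right)
    have hsum2 : ∑ x ∈ F2, (if x = y then c else co x) • x = c • y + v := by
      rw [hF2, Finset.sum_insert hyF]
      congr 1
      · simp
      · rw [← hsum, Finsupp.sum]
        refine Finset.sum_congr rfl fun x hx => ?_
        have hxy : x ≠ y := fun h => hyF (h ▸ hx)
        simp [hxy]
    have hinf := hdec.2.2 F2 hF2X (fun x => if x = y then c else co x)
    rw [hsum2] at hinf
    rw [hinf]
    refine le_trans (Finset.inf_le (Finset.mem_insert_self y co.support)) (le_of_eq ?_)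
    simp
  -- the key contradiction
  have hkey : ∀ (k k' : ℕ), k < k' → ∀ s1 s2 : G, s1 - s2 ∈ V →
      pheight q ((q ^ k) • y) < pheight q ((q ^ k) • y + s1) →
      pheight q ((q ^ k') • y) < pheight q ((q ^ k') • y + s2) → False := by
    intro k k' hkk' s1 s2 hv h1 h2
    have hukt : pheight q ((q ^ k) • y) ≠ ⊤ := ne_top_of_lt h1
    have hkk2 : pheight q ((q ^ k) • y) < pheight q ((q ^ k') • y) :=
      pheight_pow_smul_lt hkk' hukt
    have hsub : pheight q ((q ^ k) • y - (q ^ k') • y) ≤ pheight q ((q ^ k) • y) :=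
      pheight_sub_le hkk2
    have hD : ((q ^ k - q ^ k') • y) + (s1 - s2) = ((q ^ k) • y + s1) - ((q ^ k') • y + s2) := by
      rw [sub_smul]; abel
    have hup : pheight q (((q ^ k - q ^ k') • y) + (s1 - s2)) ≤ pheight q ((q ^ k) • y) := by
      refine (hcomb _ _ hv).trans ?_
      rw [sub_smul]
      exact hsub
    have hlow : pheight q ((q ^ k) • y) < pheight q (((q ^ k - q ^ k') • y) + (s1 - s2)) := by
      rw [hD]
      exact lt_of_lt_of_le (lt_min h1 (hkk2.trans h2)) (min_le_pheight_sub q _ _)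
    exact absurd hup (not_le_of_gt hlow)
  -- the set of bad exponents
  set B : Set ℕ := {k | ∃ s ∈ S, pheight q ((q ^ k) • y) < pheight q ((q ^ k) • y + s)} with hB
  set Qn : ℕ := p.natAbs ^ Mn with hQn
  have hQnpos : 0 < Qn := by
    have h0 : p.natAbs ≠ 0 := Int.natAbs_ne_zero.mpr (Fact.out (p := Prime p)).ne_zero
    positivity
  have hrep : ∀ s ∈ S, ∃ cc : ↑F → Fin Qn,
      s - (∑ g ∈ F.attach, ((cc g : ℕ) : Zp p) • (g : G)) ∈ V := by
    intro s hs
    rw [← hF] at hs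
    obtain ⟨fc, -, hfc⟩ := Submodule.mem_span_finset.mp hs
    have h4 : ∀ g : ↑F, ∃ cn : ℕ, cn < Qn ∧ ∃ b : Zp p, fc g.1 = (cn : Zp p) + q ^ Mn * b :=
      fun g => zp_residue p Mn (fc g.1)
    choose cn hcn b hb using h4
    refine ⟨fun g => ⟨cn g, hcn g⟩, ?_⟩
    have hsum : s = ∑ g ∈ F.attach, fc g.1 • (g : G) := by
      rw [← hfc]
      exact (Finset.sum_attach F fun g => fc g • g).symm
    rw [hsum, ← Finset.sum_sub_distrib]
    apply Submodule.sum_mem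
    intro g _
    rw [← sub_smul, hb g, add_sub_cancel_left, mul_comm, mul_smul]
    exact V.smul_mem _ (hqM g.1 g.2)
  set Pk : ℕ → (↑F → Fin Qn) → Prop := fun k cc => ∃ s ∈ S,
      (pheight q ((q ^ k) • y) < pheight q ((q ^ k) • y + s)) ∧
      s - (∑ g ∈ F.attach, ((cc g : ℕ) : Zp p) • (g : G)) ∈ V with hPk
  set ψ : ℕ → (↑F → Fin Qn) := fun k =>
    if h : ∃ cc, Pk k cc then h.choose else fun _ => ⟨0, hQnpos⟩ with hψ
  have hψspec : ∀ k ∈ B, Pk k (ψ k) := by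
    intro k hk
    obtain ⟨s, hs, hlt⟩ := hk
    obtain ⟨cc, hcc⟩ := hrep s hs
    have hex : ∃ cc, Pk k cc := ⟨cc, s, hs, hlt, hcc⟩
    simp only [hψ]
    rw [dif_pos hex]
    exact hex.choose_spec
  have hBfin : B.Finite := by
    by_contra hinf
    obtain ⟨k, hk, k', hk', hne, heq⟩ :=
      Set.Infinite.exists_ne_map_eq_of_mapsTo hinf
        (Set.mapsTo_univ ψ B) Set.finite_univ
    obtain ⟨s1, hs1, hlt1, hv1⟩ := hψspec k hk
    obtain ⟨s2, hs2, hlt2, hv2⟩ := hψspec k' hk'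
    have hw : (∑ g ∈ F.attach, ((ψ k g : ℕ) : Zp p) • (g : G))
        = ∑ g ∈ F.attach, ((ψ k' g : ℕ) : Zp p) • (g : G) := by rw [heq]
    have hsv : s1 - s2 ∈ V := by
      have h5 := V.sub_mem hv1 hv2
      rw [hw, sub_sub_sub_cancel_right] at h5
      exact h5
    rcases lt_or_gt_of_ne hne with h | h
    · exact hkey k k' h s1 s2 hsv hlt1 hlt2
    · exact hkey k' k h s2 s1 (by rw [← neg_sub]; exact V.neg_mem hsv) hlt2 hlt1
  obtain ⟨N, hN⟩ := hBfin.bddAbove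
  refine ⟨N + 1, ?_⟩
  intro r s hs
  by_cases hr : r = 0
  · subst hr
    rw [zero_mul, zero_smul, pheight_zero, zero_add, min_eq_right le_top]
  · obtain ⟨j, uu, huu, rfl⟩ := zp_unit_pow p hr
    obtain ⟨w, rfl⟩ := huu
    set k : ℕ := j + (N + 1) with hk
    have hkB : k ∉ B := by
      intro hkB
      have h6 := hN hkB
      omega
    have hprop : ∀ s' ∈ S, pheight q ((q ^ k) • y + s') ≤ pheight q ((q ^ k) • y) := by
      intro s' hs'
      by_contra hc
      push_neg at hc
      exact hkB ⟨s', hs', hc⟩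
    set s' : G := ((w⁻¹ : (Zp p)ˣ) : Zp p) • s with hs'def
    have hs'S : s' ∈ S := S.smul_mem _ hs
    have e1 : (w : Zp p) • ((q ^ k) • y) = ((w : Zp p) * q ^ j * q ^ (N + 1)) • y := by
      rw [smul_smul, hk, pow_add, mul_assoc]
    have e2 : (w : Zp p) • s' = s := by
      rw [hs'def, smul_smul, Units.mul_inv, one_smul]
    have hrw1 : ((w : Zp p) * q ^ j * q ^ (N + 1)) • y + s = (w : Zp p) • ((q ^ k) • y + s') := by
      rw [smul_add, e1, e2]
    have hh1 : pheight q (((w : Zp p) * q ^ j * q ^ (N + 1)) • y + s)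
        = pheight q ((q ^ k) • y + s') := by
      rw [hrw1, pheight_unit_smul q w.isUnit]
    have hh2 : pheight q (((w : Zp p) * q ^ j * q ^ (N + 1)) • y) = pheight q ((q ^ k) • y) := by
      rw [← e1, pheight_unit_smul q w.isUnit]
    have hh3 : pheight q s = pheight q s' := by
      rw [← e2, pheight_unit_smul q w.isUnit]
    rw [hh1, hh2, hh3]
    have hA1 : pheight q ((q ^ k) • y + s') ≤ pheight q ((q ^ k) • y) := hprop s' hs'S
    have hA2 : min (pheight q ((q ^ k) • y)) (pheight q s') ≤ pheight q ((q ^ k) • y + s') :=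
      min_le_pheight_add q _ _
    have hA3 : pheight q ((q ^ k) • y + s') ≤ pheight q s' := by
      have h7 := min_le_pheight_sub q ((q ^ k) • y + s') ((q ^ k) • y)
      rw [add_sub_cancel_left, min_eq_left hA1] at h7
      exact h7
    exact le_antisymm (le_min hA1 hA3) hA2

end
end

section
/- If G and H are countable abelian groups and G ≅_p H (there is a nonempty set of isomorphisms between subgroups of G and subgroups of H with the back-and-forth property), then G ≅ H. -/
noncomputable section

open UlmW

universe u

open UlmW

theorem statement_15 {G H : Type u} [AddCommGroup G] [AddCommGroup H]
    [Countable G] [Countable H]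
    (I : Set (G →ₗ.[ℤ] H)) (hI : IsPartialIsoSystem I) :
    Nonempty (G ≃+ H) := by
  obtain ⟨⟨f0, hf0⟩, hinj, hGd, hHr⟩ := hI
  obtain ⟨eG, heG⟩ := exists_surjective_nat G
  obtain ⟨eH, heH⟩ := exists_surjective_nat H
  -- one step of the back-and-forth construction
  have step : ∀ p : {f : G →ₗ.[ℤ] H // f ∈ I}, ∀ n : ℕ,
      ∃ q : {f : G →ₗ.[ℤ] H // f ∈ I}, p.1 ≤ q.1 ∧ eG n ∈ q.1.domain ∧
        ∃ y : q.1.domain, q.1 y = eH n := by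
    rintro ⟨f, hf⟩ n
    obtain ⟨g, hg, hfg, hgd⟩ := hGd f hf (eG n)
    obtain ⟨g', hg', hgg', y, hy⟩ := hHr g hg (eH n)
    exact ⟨⟨g', hg'⟩, hfg.trans hgg', hgg'.1 hgd, y, hy⟩
  choose next hle hdom hrng using step
  set F : ℕ → {f : G →ₗ.[ℤ] H // f ∈ I} :=
    fun n => Nat.rec ⟨f0, hf0⟩ (fun n p => next p n) n with hF
  have hFsucc : ∀ n, (F n).1 ≤ (F (n+1)).1 := fun n => hle (F n) n
  have hmono : ∀ {m n : ℕ}, m ≤ n → (F m).1 ≤ (F n).1 := by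
    intro m n h
    induction h with
    | refl => exact le_rfl
    | step h ih => exact le_trans ih (hFsucc _)
  have hdomF : ∀ n, eG n ∈ (F (n+1)).1.domain := fun n => hdom (F n) n
  have hrngF : ∀ n, ∃ y : (F (n+1)).1.domain, (F (n+1)).1 y = eH n := fun n => hrng (F n) n
  set c : Set (G →ₗ.[ℤ] H) := Set.range (fun n => (F n).1) with hc
  have hdir : DirectedOn (· ≤ ·) c := by
    rintro _ ⟨m, rfl⟩ _ ⟨n, rfl⟩
    exact ⟨(F (max m n)).1, ⟨max m n, rfl⟩, hmono (le_max_left m n), hmono (le_max_right m n)⟩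
  set Φ : G →ₗ.[ℤ] H := LinearPMap.sSup c hdir with hΦ
  have hleΦ : ∀ n, (F n).1 ≤ Φ := fun n => LinearPMap.le_sSup hdir ⟨n, rfl⟩
  have hmem : ∀ a : G, a ∈ Φ.domain := by
    intro a
    obtain ⟨n, rfl⟩ := heG a
    exact (hleΦ (n+1)).1 (hdomF n)
  -- value of Φ agrees with chain elements
  have hagree : ∀ n (x : (F n).1.domain) (z : Φ.domain), (x : G) = z → (F n).1 x = Φ z := by
    intro n x z hx
    exact (hleΦ n).2 hx
  set ψ : G →ₗ[ℤ] H := Φ.toFun.comp ((LinearMap.id : G →ₗ[ℤ] G).codRestrict Φ.domain hmem) with hψ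
  have hψ_apply : ∀ a : G, ψ a = Φ ⟨a, hmem a⟩ := fun a => rfl
  have hinjψ : Function.Injective ψ := by
    intro a b hab
    obtain ⟨m, rfl⟩ := heG a
    obtain ⟨n, rfl⟩ := heG b
    set k := max m n + 1 with hk
    have ham : eG m ∈ (F k).1.domain :=
      (hmono (Nat.succ_le_succ (le_max_left m n))).1 (hdomF m)
    have hbn : eG n ∈ (F k).1.domain :=
      (hmono (Nat.succ_le_succ (le_max_right m n))).1 (hdomF n)
    have h1 : (F k).1 ⟨eG m, ham⟩ = Φ ⟨eG m, hmem _⟩ := hagree k _ _ rfl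
    have h2 : (F k).1 ⟨eG n, hbn⟩ = Φ ⟨eG n, hmem _⟩ := hagree k _ _ rfl
    have : (F k).1 ⟨eG m, ham⟩ = (F k).1 ⟨eG n, hbn⟩ := by
      rw [h1, h2, ← hψ_apply, ← hψ_apply, hab]
    have := hinj (F k).1 (F k).2 this
    exact congrArg Subtype.val this
  have hsurjψ : Function.Surjective ψ := by
    intro b
    obtain ⟨n, rfl⟩ := heH b
    obtain ⟨y, hy⟩ := hrngF n
    refine ⟨(y : G), ?_⟩
    rw [hψ_apply]
    rw [← hy]
    exact (hagree (n+1) y ⟨(y : G), hmem _⟩ rfl).symm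
  exact ⟨(LinearEquiv.ofBijective ψ ⟨hinjψ, hsurjψ⟩).toAddEquiv⟩


end
end

section
/- (Barwise–Eklof) Let p be a prime and let G and H be reduced abelian p-groups. Then G ≅_p H (there is a nonempty set of isomorphisms between subgroups of G and subgroups of H with the back-and-forth property) if and only if û(α,G) = û(α,H) for every ordinal α. -/
noncomputable section

open UlmW

namespace UlmW

universe u

namespace BE
open Submodule

variable {M : Type u} [AddCommGroup M] {p : ℤ}

theorem ppow_zero : ppow p (0 : Ordinal.{u}) = (⊤ : Submodule ℤ M) :=
  Ordinal.limitRecOn_zero _ _ _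

theorem ppow_succ (α : Ordinal.{u}) :
    (ppow p (α + 1) : Submodule ℤ M) = Submodule.map (LinearMap.lsmul ℤ M p) (ppow p α) := by
  rw [show α + 1 = Order.succ α from rfl]
  exact Ordinal.limitRecOn_succ _ _ _ _

theorem ppow_limit {α : Ordinal.{u}} (hα : Order.IsSuccLimit α) :
    (ppow p α : Submodule ℤ M) = ⨅ (γ : Set.Iio α), ppow p γ.1 :=
  Ordinal.limitRecOn_limit _ _ _ _ hα

theorem mem_ppow_succ {α : Ordinal.{u}} {x : M} :
    x ∈ (ppow p (α + 1) : Submodule ℤ M) ↔ ∃ y ∈ (ppow p α : Submodule ℤ M), p • y = x := by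
  rw [ppow_succ]; simp [Submodule.mem_map]

theorem smul_mem_ppow_succ {α : Ordinal.{u}} {x : M} (hx : x ∈ (ppow p α : Submodule ℤ M)) :
    p • x ∈ (ppow p (α + 1) : Submodule ℤ M) :=
  mem_ppow_succ.2 ⟨x, hx, rfl⟩

theorem ppow_succ_le (α : Ordinal.{u}) : (ppow p (α + 1) : Submodule ℤ M) ≤ ppow p α := by
  rw [ppow_succ]
  rintro x ⟨y, hy, rfl⟩
  exact Submodule.smul_mem _ _ hy

theorem ppow_anti : ∀ {α β : Ordinal.{u}}, α ≤ β → (ppow p β : Submodule ℤ M) ≤ ppow p α := by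
  intro α β
  induction β using Ordinal.limitRecOn with
  | zero =>
    intro h
    rw [nonpos_iff_eq_zero.1 h]
  | add_one β ih =>
    intro h
    rcases lt_or_eq_of_le h with h | rfl
    · exact le_trans (ppow_succ_le β) (ih (Order.lt_succ_iff.1 h))
    · exact le_rfl
  | limit β hβ ih =>
    intro h
    rcases lt_or_eq_of_le h with h | rfl
    · rw [ppow_limit hβ]
      exact le_trans (iInf_le _ ⟨α, h⟩) le_rfl
    · exact le_rfl

theorem mem_ppow_limit {α : Ordinal.{u}} (hα : Order.IsSuccLimit α) {x : M} :
    x ∈ (ppow p α : Submodule ℤ M) ↔ ∀ β < α, x ∈ (ppow p β : Submodule ℤ M) := by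
  rw [ppow_limit hα, Submodule.mem_iInf]
  exact ⟨fun h β hβ => h ⟨β, hβ⟩, fun h γ => h γ.1 γ.2⟩

/-- `x` has height exactly `β`. -/
def HeightEq (p : ℤ) (x : M) (β : Ordinal.{u}) : Prop :=
  x ∈ (ppow p β : Submodule ℤ M) ∧ x ∉ (ppow p (β + 1) : Submodule ℤ M)

theorem le_of_mem_of_heightEq {x : M} {β γ : Ordinal.{u}}
    (h : HeightEq p x β) (hγ : x ∈ (ppow p γ : Submodule ℤ M)) : γ ≤ β := by
  by_contra hlt
  push_neg at hlt
  exact h.2 (ppow_anti (Order.add_one_le_of_lt hlt) hγ)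

theorem heightEq_unique {x : M} {β γ : Ordinal.{u}}
    (h : HeightEq p x β) (h' : HeightEq p x γ) : β = γ :=
  le_antisymm (le_of_mem_of_heightEq h' h.1) (le_of_mem_of_heightEq h h'.1)

theorem exists_heightEq (hred : (⨅ α : Ordinal.{u}, (ppow p α : Submodule ℤ M)) = ⊥)
    {x : M} (hx : x ≠ 0) : ∃ β : Ordinal.{u}, HeightEq p x β := by
  have hne : {α : Ordinal.{u} | x ∉ (ppow p α : Submodule ℤ M)}.Nonempty := by
    by_contra h
    push_neg at h
    apply hx
    have : x ∈ (⨅ α : Ordinal.{u}, (ppow p α : Submodule ℤ M)) :=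
      Submodule.mem_iInf _ |>.2 fun α => not_not.1 fun hc => Set.eq_empty_iff_forall_notMem.mp h α hc
    rw [hred] at this
    exact this
  set μ := sInf {α : Ordinal.{u} | x ∉ (ppow p α : Submodule ℤ M)} with hμ
  have hμmem : x ∉ (ppow p μ : Submodule ℤ M) := csInf_mem hne
  have hmin : ∀ β < μ, x ∈ (ppow p β : Submodule ℤ M) := fun β hβ =>
    not_not.1 fun hc => (not_le_of_gt hβ) (csInf_le' hc)
  rcases Ordinal.zero_or_succ_or_isSuccLimit μ with h0 | ⟨ν, hν⟩ | hlim
  · rw [h0] at hμmem; rw [ppow_zero] at hμmem; exact absurd Submodule.mem_top hμmem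
  · refine ⟨ν, hmin ν (hν ▸ Order.lt_succ ν), ?_⟩
    rw [show ν + 1 = Order.succ ν from rfl, hν]; exact hμmem
  · exact absurd ((mem_ppow_limit hlim).2 hmin) hμmem

theorem eq_zero_of_forall_mem_ppow
    (hred : (⨅ α : Ordinal.{u}, (ppow p α : Submodule ℤ M)) = ⊥)
    {x : M} (hx : ∀ α : Ordinal.{u}, x ∈ (ppow p α : Submodule ℤ M)) : x = 0 := by
  have : x ∈ (⨅ α : Ordinal.{u}, (ppow p α : Submodule ℤ M)) := Submodule.mem_iInf _ |>.2 hx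
  rwa [hred, Submodule.mem_bot] at this

theorem le_uCard_iff (hp : Prime p) {σ : Ordinal.{u}} {n : ℕ} :
    (n : Cardinal) ≤ uCard p M σ ↔
      ∃ x : Fin n → M,
        (∀ i, x i ∈ (ppow p σ : Submodule ℤ M) ∧ p • x i = 0) ∧
        ∀ c : Fin n → ℤ, (∑ i, c i • x i) ∈ (ppow p (σ + 1) : Submodule ℤ M) →
          ∀ i, p ∣ c i := by
  classical
  set V : Submodule ℤ M := ppow p σ ⊓ torsionBy ℤ M p with hV
  set W : Submodule ℤ V := (ppow p (σ + 1) ⊓ torsionBy ℤ M p).comap V.subtype with hW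
  set J : Ideal ℤ := Ideal.span {p} with hJ
  haveI : J.IsMaximal := PrincipalIdealRing.isMaximal_of_irreducible hp.irreducible
  letI : Field (ℤ ⧸ J) := Ideal.Quotient.field J
  have hU : uCard p M σ =
      Module.rank (ℤ ⧸ J) ((V ⧸ W) ⧸ (J • (⊤ : Submodule ℤ (V ⧸ W)))) := rfl
  have hpv : ∀ z : V, p • z = 0 := by
    intro z
    exact Subtype.ext ((mem_torsionBy_iff p (z : M)).1 (z.2 : (z:M) ∈ V).2)
  have hbot : (J • (⊤ : Submodule ℤ (V ⧸ W))) = ⊥ := by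
    refine le_bot_iff.1 (Submodule.smul_le.2 ?_)
    rintro r hr z -
    obtain ⟨a, rfl⟩ := Ideal.mem_span_singleton'.1 hr
    obtain ⟨v, rfl⟩ := W.mkQ_surjective z
    rw [← map_smul, mul_smul, hpv v, smul_zero, map_zero]
    exact Submodule.zero_mem ⊥
  set L : V →ₗ[ℤ] ((V ⧸ W) ⧸ (J • (⊤ : Submodule ℤ (V ⧸ W)))) :=
    (J • (⊤ : Submodule ℤ (V ⧸ W))).mkQ.comp W.mkQ with hLdef
  have hLsurj : Function.Surjective L :=
    (mkQ_surjective _).comp (mkQ_surjective _)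
  have hL0 : ∀ z : V, L z = 0 ↔
      ((z : M) ∈ (ppow p (σ + 1) : Submodule ℤ M)) := by
    intro z
    have h1 : L z = 0 ↔ W.mkQ z ∈ (J • (⊤ : Submodule ℤ (V ⧸ W))) := by
      rw [hLdef]
      exact Submodule.Quotient.mk_eq_zero _
    rw [h1, hbot, Submodule.mem_bot, Submodule.mkQ_apply, Submodule.Quotient.mk_eq_zero, hW,
      Submodule.mem_comap]
    constructor
    · intro h; exact (Submodule.mem_inf.1 h).1
    · intro h
      exact Submodule.mem_inf.2 ⟨h, (z.2 : (z:M) ∈ V).2⟩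
  have hsmul : ∀ (c : ℤ) (z : ((V ⧸ W) ⧸ (J • (⊤ : Submodule ℤ (V ⧸ W))))),
      (Ideal.Quotient.mk J c) • z = c • z := by
    intro c z
    obtain ⟨w, rfl⟩ := Submodule.Quotient.mk_surjective _ z
    rfl
  rw [hU]
  constructor
  · intro hn
    obtain ⟨s, hcard, hli⟩ := le_rank_iff_exists_linearIndependent_finset.1 hn
    set f : Fin n → ((s : Set ((V ⧸ W) ⧸ (J • (⊤ : Submodule ℤ (V ⧸ W)))))) :=
      fun i => ⟨(s.equivFin.symm (Fin.cast hcard.symm i) : _),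
        by simpa using (s.equivFin.symm (Fin.cast hcard.symm i)).2⟩ with hf
    have hfinj : Function.Injective f := by
      intro i j hij
      have h2 := s.equivFin.symm.injective (Subtype.ext (Subtype.ext_iff.1 hij))
      simpa [Fin.ext_iff] using Fin.ext_iff.1 h2
    set v : Fin n → ((V ⧸ W) ⧸ (J • (⊤ : Submodule ℤ (V ⧸ W)))) :=
      fun i => (f i : _) with hv
    have hvli : LinearIndependent (ℤ ⧸ J) v := hli.comp f hfinj
    choose zV hzV using fun i => hLsurj (v i)
    refine ⟨fun i => (zV i : M), fun i => ⟨((zV i).2 : ((zV i : M)) ∈ V).1,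
        (mem_torsionBy_iff p _).1 ((zV i).2 : ((zV i : M)) ∈ V).2⟩, ?_⟩
    intro c hc
    have hLz : L (∑ i, c i • zV i) = ∑ i, (Ideal.Quotient.mk J (c i)) • v i := by
      rw [map_sum]
      exact Finset.sum_congr rfl fun i _ => by rw [map_smul, hzV, hsmul]
    have hz0 : L (∑ i, c i • zV i) = 0 := by
      rw [hL0]
      have : ((∑ i, c i • zV i : V) : M) = ∑ i, c i • (zV i : M) := by
        push_cast; rfl
      rw [this]
      exact hc
    intro i
    have := Fintype.linearIndependent_iff.1 hvli (fun i => Ideal.Quotient.mk J (c i))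
      (by rw [← hLz, hz0]) i
    rwa [Ideal.Quotient.eq_zero_iff_mem, hJ, Ideal.mem_span_singleton] at this
  · rintro ⟨x, hx, hind⟩
    set xV : Fin n → V := fun i => ⟨x i, Submodule.mem_inf.2 ⟨(hx i).1,
      (mem_torsionBy_iff p _).2 (hx i).2⟩⟩ with hxV
    set v := fun i => L (xV i) with hvdef
    have hvli : LinearIndependent (ℤ ⧸ J) v := by
      rw [Fintype.linearIndependent_iff]
      intro g hg
      choose c hc using fun i => Ideal.Quotient.mk_surjective (g i)
      have hsum : L (∑ i, c i • xV i) = 0 := by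
        rw [map_sum]
        rw [show (0 : ((V ⧸ W) ⧸ (J • (⊤ : Submodule ℤ (V ⧸ W))))) = ∑ i, g i • v i from hg.symm]
        exact Finset.sum_congr rfl fun i _ => by rw [map_smul, ← hc i, hsmul]
      rw [hL0] at hsum
      have hco : ((∑ i, c i • xV i : V) : M) = ∑ i, c i • x i := by push_cast; rfl
      rw [hco] at hsum
      intro i
      rw [← hc i, Ideal.Quotient.eq_zero_iff_mem, hJ, Ideal.mem_span_singleton]
      exact hind c hsum i
    have := hvli.cardinal_lift_le_rank
    simpa using this

section Systems

variable {G : Type u} {H : Type u} [AddCommGroup G] [AddCommGroup H]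

/-- A partial isomorphism system (as in the main statement). -/
def IsPIS (I : Set (G →ₗ.[ℤ] H)) : Prop :=
  I.Nonempty ∧
  (∀ f ∈ I, Function.Injective f.toFun) ∧
  (∀ f ∈ I, ∀ a : G, ∃ g ∈ I, f ≤ g ∧ a ∈ g.domain) ∧
  (∀ f ∈ I, ∀ b : H, ∃ g ∈ I, f ≤ g ∧ ∃ y : g.domain, g y = b)

/-- A partial map preserves membership in every `p^α`. -/
def MemPres (p : ℤ) (f : G →ₗ.[ℤ] H) : Prop :=
  ∀ (a : f.domain) (α : Ordinal.{u}),
    ((a : G) ∈ (ppow p α : Submodule ℤ G) ↔ f a ∈ (ppow p α : Submodule ℤ H))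

/-- Inverse of an injective partial linear map. -/
def pinv (f : G →ₗ.[ℤ] H) (hf : Function.Injective f.toFun) : H →ₗ.[ℤ] G where
  domain := LinearMap.range f.toFun
  toFun := f.domain.subtype.comp (LinearEquiv.ofInjective f.toFun hf).symm.toLinearMap

theorem pinv_spec (f : G →ₗ.[ℤ] H) (hf : Function.Injective f.toFun)
    (y : (pinv f hf).domain) : ∃ a : f.domain, f a = (y : H) ∧ (pinv f hf) y = (a : G) := by
  refine ⟨(LinearEquiv.ofInjective f.toFun hf).symm y, ?_, rfl⟩
  have := (LinearEquiv.ofInjective f.toFun hf).apply_symm_apply y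
  exact congrArg Subtype.val this

theorem pinv_eq (f : G →ₗ.[ℤ] H) (hf : Function.Injective f.toFun)
    (y : (pinv f hf).domain) (a : f.domain) (ha : f a = (y : H)) :
    (pinv f hf) y = (a : G) := by
  obtain ⟨b, hb, hval⟩ := pinv_spec f hf y
  have : a = b := hf (by rw [show f.toFun a = f a from rfl, ha, ← hb]; rfl)
  rw [hval, this]

theorem pinv_injective (f : G →ₗ.[ℤ] H) (hf : Function.Injective f.toFun) :
    Function.Injective (pinv f hf).toFun := by
  intro y₁ y₂ h
  obtain ⟨a₁, ha₁, hv₁⟩ := pinv_spec f hf y₁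
  obtain ⟨a₂, ha₂, hv₂⟩ := pinv_spec f hf y₂
  have hco : (a₁ : G) = (a₂ : G) := by
    rw [show (pinv f hf).toFun y₁ = (pinv f hf) y₁ from rfl,
      show (pinv f hf).toFun y₂ = (pinv f hf) y₂ from rfl] at h
    rw [← hv₁, ← hv₂, h]
  have : a₁ = a₂ := Subtype.ext hco
  apply Subtype.ext
  rw [← ha₁, ← ha₂, this]

theorem pinv_memPres {p : ℤ} (f : G →ₗ.[ℤ] H) (hf : Function.Injective f.toFun)
    (hm : MemPres p f) : MemPres p (pinv f hf) := by
  intro y α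
  obtain ⟨a, ha, hval⟩ := pinv_spec f hf y
  rw [hval, ← ha]
  exact (hm a α).symm

theorem pinv_le_pinv {f g : G →ₗ.[ℤ] H} (hf : Function.Injective f.toFun)
    (hg : Function.Injective g.toFun) (h : f ≤ g) : pinv f hf ≤ pinv g hg := by
  have hdom : (pinv f hf).domain ≤ (pinv g hg).domain := by
    rintro b hb
    obtain ⟨a, rfl⟩ := hb
    exact ⟨Submodule.inclusion h.1 a, (h.2 rfl).symm⟩
  refine ⟨hdom, ?_⟩
  intro y₁ y₂ hco
  obtain ⟨a, ha, hval⟩ := pinv_spec f hf y₁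
  rw [hval]
  refine (pinv_eq g hg y₂ (Submodule.inclusion h.1 a) ?_).symm
  rw [← (h.2 (x := a) rfl), ha, hco]

theorem pinv_dom_finite (f : G →ₗ.[ℤ] H) (hf : Function.Injective f.toFun)
    (hfin : (f.domain : Set G).Finite) : ((pinv f hf).domain : Set H).Finite := by
  haveI : Finite f.domain := hfin.to_subtype
  have : ((pinv f hf).domain : Set H) = Set.range f.toFun := LinearMap.coe_range _
  rw [this]
  exact Set.finite_range _

/-- Members of a partial isomorphism system preserve the `ppow` filtration. -/
theorem system_memPres {p : ℤ} (I : Set (G →ₗ.[ℤ] H)) (hI : IsPIS I) :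
    ∀ f ∈ I, MemPres p f := by
  have main : ∀ α : Ordinal.{u}, ∀ f ∈ I, ∀ a : f.domain,
      ((a : G) ∈ (ppow p α : Submodule ℤ G) ↔ f a ∈ (ppow p α : Submodule ℤ H)) := by
    intro α
    induction α using Ordinal.limitRecOn with
    | zero => intro f hf a; simp [ppow_zero]
    | add_one α ih =>
      intro f hf a
      constructor
      · intro ha
        obtain ⟨y, hy, hyx⟩ := mem_ppow_succ.1 ha
        obtain ⟨g, hg, hfg, hyg⟩ := hI.2.2.1 f hf y
        have hag : (a : G) ∈ g.domain := hfg.1 a.2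
        have hval : f a = g ⟨a, hag⟩ := hfg.2 rfl
        have h1 : g ⟨y, hyg⟩ ∈ (ppow p α : Submodule ℤ H) := (ih g hg ⟨y, hyg⟩).1 hy
        have h2 : g ⟨a, hag⟩ = p • g ⟨y, hyg⟩ := by
          rw [← g.map_smul]
          congr 1
          exact Subtype.ext hyx.symm
        rw [hval, h2]
        exact smul_mem_ppow_succ h1
      · intro hfa
        obtain ⟨c, hc, hca⟩ := mem_ppow_succ.1 hfa
        obtain ⟨g, hg, hfg, yb, hyb⟩ := hI.2.2.2 f hf c
        have hag : (a : G) ∈ g.domain := hfg.1 a.2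
        have hval : f a = g ⟨a, hag⟩ := hfg.2 rfl
        have heqv : g.toFun (p • yb) = g.toFun ⟨a, hag⟩ := by
          show g (p • yb) = g ⟨a, hag⟩
          rw [g.map_smul, hyb, hca, ← hval]
        have heq := hI.2.1 g hg heqv
        have hyG : (yb : G) ∈ (ppow p α : Submodule ℤ G) :=
          (ih g hg yb).2 (by rw [hyb]; exact hc)
        refine mem_ppow_succ.2 ⟨yb, hyG, ?_⟩
        have := congrArg Subtype.val heq
        simpa using this
    | limit α hlim ih =>
      intro f hf a
      rw [mem_ppow_limit hlim, mem_ppow_limit hlim]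
      exact forall₂_congr fun β hβ => ih β hβ f hf a
  intro f hf a α
  exact main α f hf a

theorem exists_extend_list (I : Set (G →ₗ.[ℤ] H)) (hI : IsPIS I) (f : G →ₗ.[ℤ] H)
    (hf : f ∈ I) (l : List G) : ∃ g ∈ I, f ≤ g ∧ ∀ a ∈ l, a ∈ g.domain := by
  induction l with
  | nil => exact ⟨f, hf, le_rfl, by simp⟩
  | cons a l ih =>
    obtain ⟨g, hg, hfg, hl⟩ := ih
    obtain ⟨g', hg', hgg', ha⟩ := hI.2.2.1 g hg a
    refine ⟨g', hg', le_trans hfg hgg', ?_⟩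
    intro b hb
    rcases List.mem_cons.1 hb with rfl | hb
    · exact ha
    · exact hgg'.1 (hl b hb)

variable {p : ℤ}

theorem uCard_le_transfer (hp : Prime p) (I : Set (G →ₗ.[ℤ] H)) (hI : IsPIS I)
    (hmp : ∀ f ∈ I, MemPres p f) (σ : Ordinal.{u}) (n : ℕ)
    (hn : (n : Cardinal) ≤ uCard p G σ) : (n : Cardinal) ≤ uCard p H σ := by
  rw [le_uCard_iff hp] at hn ⊢
  obtain ⟨x, hx, hind⟩ := hn
  obtain ⟨f₀, hf₀⟩ := hI.1
  obtain ⟨g, hg, -, hdom⟩ := exists_extend_list I hI f₀ hf₀ (List.ofFn x)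
  have hm : ∀ i, x i ∈ g.domain := fun i => hdom _ (by
    rw [List.mem_ofFn]
    exact ⟨i, rfl⟩)
  set xg : Fin n → g.domain := fun i => ⟨x i, hm i⟩ with hxg
  refine ⟨fun i => g (xg i), fun i => ⟨(hmp g hg (xg i) σ).1 (hx i).1, ?_⟩, ?_⟩
  · rw [← g.map_smul]
    have h0 : p • xg i = 0 := Subtype.ext (by
      show p • x i = (0 : G)
      exact (hx i).2)
    rw [h0, g.map_zero]
  · intro c hc
    have hsum : ∑ i, c i • g (xg i) = g (∑ i, c i • xg i) := by
      rw [show (∑ i, c i • g (xg i)) = ∑ i, g (c i • xg i) from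
        Finset.sum_congr rfl fun i _ => (g.map_smul _ _).symm]
      exact (map_sum g.toFun _ _).symm
    rw [hsum] at hc
    have hback := (hmp g hg (∑ i, c i • xg i) (σ + 1)).2 hc
    have hco : ((∑ i, c i • xg i : g.domain) : G) = ∑ i, c i • x i := by push_cast; rfl
    rw [hco] at hback
    exact hind c hback

theorem min_aleph0_congr {a b : Cardinal} (h : ∀ n : ℕ, ((n : Cardinal) ≤ a ↔ (n : Cardinal) ≤ b)) :
    min a Cardinal.aleph0 = min b Cardinal.aleph0 := by
  rcases le_or_gt Cardinal.aleph0 a with ha | ha <;> rcases le_or_gt Cardinal.aleph0 b with hb | hb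
  · rw [min_eq_right ha, min_eq_right hb]
  · obtain ⟨m, rfl⟩ := Cardinal.lt_aleph0.1 hb
    have h1 : ((m + 1 : ℕ) : Cardinal) ≤ a := (Cardinal.nat_lt_aleph0 (m + 1)).le.trans ha
    have h2 := (h (m + 1)).1 h1
    rw [Nat.cast_le] at h2
    omega
  · obtain ⟨m, rfl⟩ := Cardinal.lt_aleph0.1 ha
    have h1 : ((m + 1 : ℕ) : Cardinal) ≤ b := (Cardinal.nat_lt_aleph0 (m + 1)).le.trans hb
    have h2 := (h (m + 1)).2 h1
    rw [Nat.cast_le] at h2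
    omega
  · obtain ⟨m, rfl⟩ := Cardinal.lt_aleph0.1 ha
    obtain ⟨k, rfl⟩ := Cardinal.lt_aleph0.1 hb
    have h1 := (h m).1 le_rfl
    have h2 := (h k).2 le_rfl
    rw [Nat.cast_le] at h1 h2
    have : m = k := le_antisymm h1 h2
    rw [this]

theorem nat_le_congr_of_min_eq {a b : Cardinal}
    (h : min a Cardinal.aleph0 = min b Cardinal.aleph0) (n : ℕ) :
    ((n : Cardinal) ≤ a ↔ (n : Cardinal) ≤ b) := by
  have ha : ((n : Cardinal) ≤ min a Cardinal.aleph0) ↔ (n : Cardinal) ≤ a := by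
    rw [le_min_iff]
    exact ⟨fun h' => h'.1, fun h' => ⟨h', (Cardinal.nat_lt_aleph0 n).le⟩⟩
  have hb : ((n : Cardinal) ≤ min b Cardinal.aleph0) ↔ (n : Cardinal) ≤ b := by
    rw [le_min_iff]
    exact ⟨fun h' => h'.1, fun h' => ⟨h', (Cardinal.nat_lt_aleph0 n).le⟩⟩
  rw [← ha, ← hb, h]

/-- The inverse system. -/
def pinvSystem (I : Set (G →ₗ.[ℤ] H)) : Set (H →ₗ.[ℤ] G) :=
  {g | ∃ f, ∃ _ : f ∈ I, ∃ hinj : Function.Injective f.toFun, g = pinv f hinj}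

theorem pinvSystem_isPIS (I : Set (G →ₗ.[ℤ] H)) (hI : IsPIS I) : IsPIS (pinvSystem I) := by
  obtain ⟨f₀, hf₀⟩ := hI.1
  refine ⟨⟨pinv f₀ (hI.2.1 f₀ hf₀), f₀, hf₀, hI.2.1 f₀ hf₀, rfl⟩, ?_, ?_, ?_⟩
  · rintro g ⟨f, hf, hinj, rfl⟩
    exact pinv_injective f hinj
  · rintro g ⟨f, hf, hinj, rfl⟩ a
    obtain ⟨g', hg', hfg', y, hy⟩ := hI.2.2.2 f hf a
    have hinj' := hI.2.1 g' hg'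
    refine ⟨pinv g' hinj', ⟨g', hg', hinj', rfl⟩, pinv_le_pinv hinj hinj' hfg', ?_⟩
    exact ⟨y, hy⟩
  · rintro g ⟨f, hf, hinj, rfl⟩ b
    obtain ⟨g', hg', hfg', hb⟩ := hI.2.2.1 f hf b
    have hinj' := hI.2.1 g' hg'
    refine ⟨pinv g' hinj', ⟨g', hg', hinj', rfl⟩, pinv_le_pinv hinj hinj' hfg', ?_⟩
    refine ⟨⟨g' ⟨b, hb⟩, LinearMap.mem_range.2 ⟨⟨b, hb⟩, rfl⟩⟩, ?_⟩
    exact pinv_eq g' hinj' _ ⟨b, hb⟩ rfl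

theorem pinvSystem_memPres (I : Set (G →ₗ.[ℤ] H)) (hI : IsPIS I) :
    ∀ g ∈ pinvSystem I, MemPres p g := by
  rintro g ⟨f, hf, hinj, rfl⟩
  exact pinv_memPres f hinj (system_memPres I hI f hf)

/-- Forward direction: a partial isomorphism system forces equality of `uHat`. -/
theorem uHat_eq_of_system (hp : Prime p) (I : Set (G →ₗ.[ℤ] H)) (hI : IsPIS I)
    (α : Ordinal.{u}) : uHat p G α = uHat p H α := by
  refine min_aleph0_congr fun n => ⟨?_, ?_⟩
  · exact uCard_le_transfer hp I hI (system_memPres I hI) α n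
  · exact uCard_le_transfer hp (pinvSystem I) (pinvSystem_isPIS I hI)
      (pinvSystem_memPres I hI) α n

end Systems

section Backward

variable {G : Type u} [AddCommGroup G] {p : ℤ}

/-- Inverting a unit mod the order of `x`. -/
theorem exists_smul_smul_eq (hp : Prime p) {c : ℤ} (hc : ¬ p ∣ c) {x : G}
    (hord : ∃ k : ℕ, p ^ k • x = 0) : ∃ r : ℤ, r • (c • x) = x := by
  obtain ⟨k, hk⟩ := hord
  have hco : IsCoprime (p ^ k) c := (hp.coprime_iff_not_dvd.2 hc).pow_left
  obtain ⟨a, b, hab⟩ := hco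
  refine ⟨b, ?_⟩
  have h1 : b * c = 1 - a * p ^ k := by linarith
  calc b • c • x = (b * c) • x := (mul_smul b c x).symm
    _ = (1 - a * p ^ k) • x := by rw [h1]
    _ = (1 : ℤ) • x - (a * p ^ k) • x := sub_smul _ _ _
    _ = x - a • (p ^ k • x) := by rw [one_smul, mul_smul]
    _ = x := by rw [hk, smul_zero, sub_zero]

theorem finite_sup_span {S : Submodule ℤ G} (hS : (S : Set G).Finite) {x : G} {k : ℕ}
    (hppos : 0 < p) (hk : p ^ k • x = 0) :
    ((S ⊔ Submodule.span ℤ {x} : Submodule ℤ G) : Set G).Finite := by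
  set m : ℤ := p ^ k with hm
  have hm0 : 0 < m := pow_pos hppos k
  apply Set.Finite.subset ((hS.prod (Set.finite_Icc (0 : ℤ) m)).image
    (fun sc : G × ℤ => sc.1 + sc.2 • x))
  rintro z hz
  obtain ⟨s, hs, t, ht, rfl⟩ := Submodule.mem_sup.1 hz
  obtain ⟨c, rfl⟩ := Submodule.mem_span_singleton.1 ht
  refine ⟨(s, c % m), ⟨hs, ?_⟩, ?_⟩
  · exact Set.mem_Icc.2 ⟨Int.emod_nonneg c hm0.ne', (Int.emod_lt_of_pos c hm0).le⟩
  · show s + (c % m) • x = s + c • x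
    have hdecomp : c = m * (c / m) + c % m := (Int.mul_ediv_add_emod c m).symm
    have : c • x = (c % m) • x := by
      conv_lhs => rw [hdecomp]
      rw [add_smul, mul_comm, mul_smul, hk, smul_zero, zero_add]
    rw [this]

/-- A nonzero coset of a finite submodule has a representative of maximal height. -/
theorem exists_proper_rep (hred : (⨅ α : Ordinal.{u}, (ppow p α : Submodule ℤ G)) = ⊥)
    {S : Submodule ℤ G} (hS : (S : Set G).Finite) {x : G} (hx : x ∉ S) :
    ∃ (s₀ : G) (σ : Ordinal.{u}), s₀ ∈ S ∧ HeightEq p (x + s₀) σ ∧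
      ∀ s ∈ S, (x + s₀) + s ∉ (ppow p (σ + 1) : Submodule ℤ G) := by
  classical
  set hfun : G → Ordinal.{u} := fun g =>
    if h : ∃ β, HeightEq p g β then h.choose else 0 with hfun_def
  have hfun_spec : ∀ g β, HeightEq p g β → hfun g = β := by
    intro g β hβ
    have h : ∃ β, HeightEq p g β := ⟨β, hβ⟩
    rw [hfun_def]
    simp only [dif_pos h]
    exact heightEq_unique h.choose_spec hβ
  set B : Set Ordinal.{u} := {β | ∃ s ∈ (S : Set G), HeightEq p (x + s) β} with hB
  have hBfin : B.Finite := by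
    apply Set.Finite.subset ((hS.image (fun s => x + s)).image hfun)
    rintro β ⟨s, hs, hβ⟩
    exact ⟨x + s, ⟨s, hs, rfl⟩, hfun_spec _ _ hβ⟩
  have hx0 : x + (0 : G) ≠ 0 := by
    intro h
    apply hx
    have : x = 0 := by simpa using h
    rw [this]; exact S.zero_mem
  have hBne : B.Nonempty := by
    obtain ⟨β, hβ⟩ := exists_heightEq hred hx0
    exact ⟨β, 0, S.zero_mem, hβ⟩
  obtain ⟨σ, hσB, hσmax⟩ := Set.Finite.exists_maximalFor id B hBfin hBne
  obtain ⟨s₀, hs₀, hhe⟩ := hσB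
  refine ⟨s₀, σ, hs₀, hhe, ?_⟩
  intro s hs hmem
  have hne : x + (s₀ + s) ≠ 0 := by
    intro h
    apply hx
    have : x = -(s₀ + s) := by linear_combination (norm := abel_nf) h
    rw [this]; exact S.neg_mem (S.add_mem hs₀ hs)
  obtain ⟨β, hβ⟩ := exists_heightEq hred hne
  have hmem' : x + (s₀ + s) ∈ (ppow p (σ + 1) : Submodule ℤ G) := by
    rwa [← add_assoc]
  have h1 : σ + 1 ≤ β := le_of_mem_of_heightEq hβ hmem'
  have hβB : β ∈ B := ⟨s₀ + s, S.add_mem hs₀ hs, hβ⟩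
  have h2 : σ ≤ β := le_trans (le_of_lt (Order.lt_succ σ)) h1
  have h3 : σ = β := le_antisymm h2 (hσmax hβB h2)
  rw [← h3] at h1
  exact absurd h1 (not_le_of_gt (Order.lt_succ σ))

/-- Properness passes to multiples by units mod `p`. -/
theorem proper_smul_aux (hp : Prime p) {S : Submodule ℤ G} {x' : G} {σ : Ordinal.{u}}
    (hord : ∃ k : ℕ, p ^ k • x' = 0)
    (hprop : ∀ s ∈ S, x' + s ∉ (ppow p (σ + 1) : Submodule ℤ G)) {c : ℤ} (hc : ¬ p ∣ c) :
    ∀ s ∈ S, c • x' + s ∉ (ppow p (σ + 1) : Submodule ℤ G) := by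
  intro s hs hmem
  obtain ⟨r, hr⟩ := exists_smul_smul_eq hp hc hord
  have : x' + r • s ∈ (ppow p (σ + 1) : Submodule ℤ G) := by
    have h2 := (ppow p (σ + 1) : Submodule ℤ G).smul_mem r hmem
    rwa [smul_add, hr] at h2
  exact hprop (r • s) (S.smul_mem r hs) this

/-- An independent family of `p`-torsion elements of `p^σ G` inside `A`. -/
def FamCond (p : ℤ) (σ : Ordinal.{u}) (A : Submodule ℤ G) (k : ℕ) : Prop :=
  ∃ x : Fin k → G, (∀ i, x i ∈ (ppow p σ : Submodule ℤ G) ∧ p • x i = 0 ∧ x i ∈ A) ∧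
    ∀ c : Fin k → ℤ, (∑ i, c i • x i) ∈ (ppow p (σ + 1) : Submodule ℤ G) → ∀ i, p ∣ c i

theorem famCond_zero {σ : Ordinal.{u}} {A : Submodule ℤ G} : FamCond p σ A 0 :=
  ⟨fun i => i.elim0, fun i => i.elim0, fun c _ i => i.elim0⟩

theorem le_uCard_iff_famCond_top (hp : Prime p) {σ : Ordinal.{u}} {n : ℕ} :
    (n : Cardinal) ≤ uCard p G σ ↔ FamCond p σ (⊤ : Submodule ℤ G) n := by
  rw [le_uCard_iff hp]
  constructor
  · rintro ⟨x, hx, hind⟩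
    exact ⟨x, fun i => ⟨(hx i).1, (hx i).2, trivial⟩, hind⟩
  · rintro ⟨x, hx, hind⟩
    exact ⟨x, fun i => ⟨(hx i).1, (hx i).2.1⟩, hind⟩

theorem famCond_bound (hp : Prime p) {S : Submodule ℤ G} (hS : (S : Set G).Finite)
    {σ : Ordinal.{u}} {k : ℕ} (h : FamCond p σ (S ⊔ ppow p (σ + 1)) k) :
    k ≤ Nat.card (S : Set G) := by
  obtain ⟨x, hx, hind⟩ := h
  choose s hsS w hw hxsw using fun i => Submodule.mem_sup.1 (hx i).2.2
  haveI : Finite (S : Set G) := hS.to_subtype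
  have hinj : Function.Injective (fun c : Fin k → Fin 2 =>
      (⟨∑ i, ((c i : ℕ) : ℤ) • s i, Submodule.sum_mem _ fun i _ =>
        Submodule.smul_mem _ _ (hsS i)⟩ : (S : Set G))) := by
    intro c c' hcc
    by_contra hne
    have hsum0 : ∑ i, (((c i : ℕ) : ℤ) - ((c' i : ℕ) : ℤ)) • s i = 0 := by
      have hvv := congrArg Subtype.val hcc
      simp only at hvv
      rw [show (∑ i, (((c i : ℕ) : ℤ) - ((c' i : ℕ) : ℤ)) • s i)
          = ∑ i, (((c i : ℕ) : ℤ) • s i) - ∑ i, (((c' i : ℕ) : ℤ) • s i) by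
        rw [← Finset.sum_sub_distrib]
        exact Finset.sum_congr rfl fun i _ => sub_smul _ _ _]
      rw [hvv, sub_self]
    have hmem : ∑ i, (((c i : ℕ) : ℤ) - ((c' i : ℕ) : ℤ)) • x i ∈
        (ppow p (σ + 1) : Submodule ℤ G) := by
      have hxd : ∀ i, x i = s i + w i := fun i => (hxsw i).symm
      have hcomp : ∑ i, (((c i : ℕ) : ℤ) - ((c' i : ℕ) : ℤ)) • x i
          = ∑ i, (((c i : ℕ) : ℤ) - ((c' i : ℕ) : ℤ)) • s i
            + ∑ i, (((c i : ℕ) : ℤ) - ((c' i : ℕ) : ℤ)) • w i := by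
        rw [← Finset.sum_add_distrib]
        refine Finset.sum_congr rfl fun i _ => ?_
        rw [hxd i, smul_add]
      rw [hcomp, hsum0, zero_add]
      exact Submodule.sum_mem _ fun i _ => Submodule.smul_mem _ _ (hw i)
    have hall := hind _ hmem
    have hne' : ∃ j, c j ≠ c' j := by
      by_contra hno
      push_neg at hno
      exact hne (funext hno)
    obtain ⟨j, hj⟩ := hne'
    have hdvd := hall j
    have hcases : (((c j : ℕ) : ℤ) - ((c' j : ℕ) : ℤ)) = 1 ∨
        (((c j : ℕ) : ℤ) - ((c' j : ℕ) : ℤ)) = -1 := by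
      have h1 : (c j : ℕ) < 2 := (c j).2
      have h2 : (c' j : ℕ) < 2 := (c' j).2
      have h3 : (c j : ℕ) ≠ (c' j : ℕ) := fun hv => hj (Fin.ext hv)
      omega
    rcases hcases with hcc1 | hcc1 <;> rw [hcc1] at hdvd
    · exact hp.not_unit (isUnit_of_dvd_one hdvd)
    · exact hp.not_unit (isUnit_of_dvd_one ((dvd_neg).1 hdvd))
  have h2k : 2 ^ k ≤ Nat.card (S : Set G) := by
    have := Nat.card_le_card_of_injective _ hinj
    rwa [Nat.card_eq_fintype_card, Fintype.card_fun, Fintype.card_fin, Fintype.card_fin] at this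
  exact le_of_lt (lt_of_lt_of_le (Nat.lt_two_pow_self (n := k)) h2k)

variable {H : Type u} [AddCommGroup H]

/-- Transfer of families along a membership preserving partial isomorphism. -/
theorem famCond_transfer (f : G →ₗ.[ℤ] H) (hmem : MemPres p f) {σ : Ordinal.{u}} {k : ℕ}
    (h : FamCond p σ (f.domain ⊔ ppow p (σ + 1)) k) :
    FamCond p σ (LinearMap.range f.toFun ⊔ ppow p (σ + 1)) k := by
  obtain ⟨x, hx, hind⟩ := h
  choose s hsS w hw hxsw using fun i => Submodule.mem_sup.1 (hx i).2.2
  have hs_pp : ∀ i, s i ∈ (ppow p σ : Submodule ℤ G) := by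
    intro i
    have : s i = x i - w i := by rw [← hxsw i]; abel
    rw [this]
    exact Submodule.sub_mem _ (hx i).1 (ppow_succ_le σ (hw i))
  have hps_pp : ∀ i, p • s i ∈ (ppow p (σ + 1 + 1) : Submodule ℤ G) := by
    intro i
    have h1 : p • s i = p • x i - p • w i := by
      rw [← smul_sub]; congr 1; rw [← hxsw i]; abel
    rw [h1, (hx i).2.1, zero_sub]
    exact Submodule.neg_mem _ (smul_mem_ppow_succ (hw i))
  set se : Fin k → f.domain := fun i => ⟨s i, hsS i⟩ with hse
  set t : Fin k → H := fun i => f (se i) with ht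
  have ht_pp : ∀ i, t i ∈ (ppow p σ : Submodule ℤ H) := fun i => (hmem (se i) σ).1 (hs_pp i)
  have hpt_pp : ∀ i, p • t i ∈ (ppow p (σ + 1 + 1) : Submodule ℤ H) := by
    intro i
    have h1 : p • t i = f (p • se i) := (f.map_smul p (se i)).symm
    rw [h1]
    refine (hmem (p • se i) (σ + 1 + 1)).1 ?_
    show p • s i ∈ _
    exact hps_pp i
  choose w' hw' hpw' using fun i => mem_ppow_succ.1 (hpt_pp i)
  set y : Fin k → H := fun i => t i - w' i with hy
  refine ⟨y, fun i => ⟨?_, ?_, ?_⟩, ?_⟩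
  · exact Submodule.sub_mem _ (ht_pp i) (ppow_succ_le σ (hw' i))
  · show p • (t i - w' i) = 0
    rw [smul_sub, hpw' i, sub_self]
  · refine Submodule.mem_sup.2 ⟨t i, LinearMap.mem_range.2 ⟨se i, rfl⟩, -(w' i),
      Submodule.neg_mem _ (hw' i), ?_⟩
    show t i + -(w' i) = t i - w' i
    abel
  · intro c hc
    have hty : ∑ i, c i • t i = (∑ i, c i • y i) + ∑ i, c i • w' i := by
      rw [← Finset.sum_add_distrib]
      refine Finset.sum_congr rfl fun i _ => ?_
      show c i • t i = c i • (t i - w' i) + c i • w' i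
      rw [← smul_add]; congr 1; abel
    have htmem : ∑ i, c i • t i ∈ (ppow p (σ + 1) : Submodule ℤ H) := by
      rw [hty]
      exact Submodule.add_mem _ hc (Submodule.sum_mem _ fun i _ =>
        Submodule.smul_mem _ _ (hw' i))
    have hft : ∑ i, c i • t i = f (∑ i, c i • se i) := by
      rw [show (∑ i, c i • t i) = ∑ i, f (c i • se i) from
        Finset.sum_congr rfl fun i _ => (f.map_smul _ _).symm]
      exact (map_sum f.toFun _ _).symm
    rw [hft] at htmem
    have hsmem : ((∑ i, c i • se i : f.domain) : G) ∈ (ppow p (σ + 1) : Submodule ℤ G) :=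
      (hmem _ (σ + 1)).2 htmem
    have hcos : ((∑ i, c i • se i : f.domain) : G) = ∑ i, c i • s i := by push_cast; rfl
    rw [hcos] at hsmem
    have hxmem : ∑ i, c i • x i ∈ (ppow p (σ + 1) : Submodule ℤ G) := by
      have hcomp : ∑ i, c i • x i = (∑ i, c i • s i) + ∑ i, c i • w i := by
        rw [← Finset.sum_add_distrib]
        refine Finset.sum_congr rfl fun i _ => ?_
        rw [← hxsw i, smul_add]
      rw [hcomp]
      exact Submodule.add_mem _ hsmem (Submodule.sum_mem _ fun i _ =>
        Submodule.smul_mem _ _ (hw i))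
    exact hind c hxmem

theorem range_finite (f : G →ₗ.[ℤ] H) (hfin : (f.domain : Set G).Finite) :
    ((LinearMap.range f.toFun : Submodule ℤ H) : Set H).Finite := by
  haveI : Finite f.domain := hfin.to_subtype
  have : ((LinearMap.range f.toFun : Submodule ℤ H) : Set H) = Set.range f.toFun :=
    LinearMap.coe_range _
  rw [this]
  exact Set.finite_range _

theorem pinv_range (f : G →ₗ.[ℤ] H) (hf : Function.Injective f.toFun) :
    LinearMap.range (pinv f hf).toFun = f.domain := by
  apply le_antisymm
  · rintro a ⟨y, rfl⟩
    obtain ⟨b, _, hval⟩ := pinv_spec f hf y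
    rw [show (pinv f hf).toFun y = (pinv f hf) y from rfl, hval]
    exact b.2
  · intro a ha
    refine ⟨⟨f ⟨a, ha⟩, LinearMap.mem_range.2 ⟨⟨a, ha⟩, rfl⟩⟩, ?_⟩
    exact pinv_eq f hf _ ⟨a, ha⟩ rfl

/-- The key counting lemma: a witness avoiding `S + p^{σ+1} G` in `G` yields one in `H`. -/
theorem exists_avoid (hp : Prime p) (f : G →ₗ.[ℤ] H) (hfin : (f.domain : Set G).Finite)
    (hinj : Function.Injective f.toFun) (hmem : MemPres p f) {σ : Ordinal.{u}}
    (hu : ∀ n : ℕ, ((n : Cardinal) ≤ uCard p G σ ↔ (n : Cardinal) ≤ uCard p H σ))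
    {z : G} (hz1 : z ∈ (ppow p σ : Submodule ℤ G)) (hz2 : p • z = 0)
    (hz3 : z ∉ f.domain ⊔ ppow p (σ + 1)) :
    ∃ z' : H, z' ∈ (ppow p σ : Submodule ℤ H) ∧ p • z' = 0 ∧
      z' ∉ LinearMap.range f.toFun ⊔ ppow p (σ + 1) := by
  classical
  set T : Submodule ℤ H := LinearMap.range f.toFun with hT
  have hTfin : (T : Set H).Finite := range_finite f hfin
  set dS : ℕ := Nat.findGreatest (FamCond p σ (f.domain ⊔ ppow p (σ + 1)))
    (Nat.card (f.domain : Set G)) with hdS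
  set dT : ℕ := Nat.findGreatest (FamCond p σ (T ⊔ ppow p (σ + 1)))
    (Nat.card (T : Set H)) with hdT
  have hdS_spec : FamCond p σ (f.domain ⊔ ppow p (σ + 1)) dS :=
    Nat.findGreatest_spec (Nat.zero_le _) famCond_zero
  have hdT_max : ∀ k, FamCond p σ (T ⊔ ppow p (σ + 1)) k → k ≤ dT := fun k hk =>
    Nat.le_findGreatest (famCond_bound hp hTfin hk) hk
  have hdS_max : ∀ k, FamCond p σ (f.domain ⊔ ppow p (σ + 1)) k → k ≤ dS := fun k hk =>
    Nat.le_findGreatest (famCond_bound hp hfin hk) hk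
  have hST : dS ≤ dT := hdT_max dS (famCond_transfer f hmem hdS_spec)
  have hTS : dT ≤ dS := by
    refine hdS_max dT ?_
    have h1 := famCond_transfer (pinv f hinj) (pinv_memPres f hinj hmem) (σ := σ) (k := dT) ?_
    · rwa [pinv_range] at h1
    · have hdomT : (pinv f hinj).domain = T := rfl
      rw [hdomT]
      exact Nat.findGreatest_spec (Nat.zero_le _) famCond_zero
  have hbig : FamCond p σ (⊤ : Submodule ℤ G) (dS + 1) := by
    obtain ⟨x, hx, hind⟩ := hdS_spec
    refine ⟨Fin.cons z x, fun i => ?_, ?_⟩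
    · refine Fin.cases ?_ ?_ i
      · exact ⟨hz1, hz2, trivial⟩
      · intro j
        simp only [Fin.cons_succ]
        exact ⟨(hx j).1, (hx j).2.1, trivial⟩
    · intro c hc
      have hsum : ∑ i, c i • (Fin.cons z x : Fin (dS+1) → G) i
          = c 0 • z + ∑ j, c j.succ • x j := by
        rw [Fin.sum_univ_succ]
        simp [Fin.cons_zero, Fin.cons_succ]
      rw [hsum] at hc
      by_cases hdvd : p ∣ c 0
      · obtain ⟨c0', hc0'⟩ := hdvd
        have hz0 : c 0 • z = 0 := by
          rw [hc0', mul_comm, mul_smul, hz2, smul_zero]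
        rw [hz0, zero_add] at hc
        have htail := hind _ hc
        intro i
        refine Fin.cases ?_ ?_ i
        · exact ⟨c0', hc0'⟩
        · exact fun j => htail j
      · exfalso
        have hczmem : c 0 • z ∈ f.domain ⊔ ppow p (σ + 1) := by
          have h1 : c 0 • z = (c 0 • z + ∑ j, c j.succ • x j) - ∑ j, c j.succ • x j := by abel
          rw [h1]
          refine Submodule.sub_mem _ (Submodule.mem_sup_right hc) ?_
          exact Submodule.sum_mem _ fun j _ => Submodule.smul_mem _ _ (hx j).2.2
        obtain ⟨r, hr⟩ := exists_smul_smul_eq hp hdvd ⟨1, by rwa [pow_one]⟩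
        exact hz3 (hr ▸ Submodule.smul_mem _ r hczmem)
  have hGcard : ((dS + 1 : ℕ) : Cardinal) ≤ uCard p G σ :=
    (le_uCard_iff_famCond_top hp).2 hbig
  have hHcard := (hu (dS + 1)).1 hGcard
  have hbigH : FamCond p σ (⊤ : Submodule ℤ H) (dT + 1) := by
    have h1 := (le_uCard_iff_famCond_top hp).1 hHcard
    rwa [le_antisymm hST hTS] at h1
  by_contra hno
  push_neg at hno
  obtain ⟨x, hx, hind⟩ := hbigH
  have hTfam : FamCond p σ (T ⊔ ppow p (σ + 1)) (dT + 1) := by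
    refine ⟨x, fun i => ⟨(hx i).1, (hx i).2.1, ?_⟩, hind⟩
    exact hno (x i) (hx i).1 (hx i).2.1
  have := hdT_max _ hTfam
  omega

/-- Extending a finite height-preserving partial isomorphism by a matched pair. -/
theorem extend_pair (hp : Prime p) (hppos : 0 < p)
    (hG : ∀ g : G, ∃ k : ℕ, p ^ k • g = 0) (hH : ∀ h : H, ∃ k : ℕ, p ^ k • h = 0)
    {f : G →ₗ.[ℤ] H} (hfin : (f.domain : Set G).Finite) (hinj : Function.Injective f.toFun)
    (hmem : MemPres p f) {σ : Ordinal.{u}} {x' : G} {y : H}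
    (hxS : x' ∉ f.domain) (hpx : p • x' ∈ f.domain)
    (hx1 : x' ∈ (ppow p σ : Submodule ℤ G))
    (hxprop : ∀ s ∈ f.domain, x' + s ∉ (ppow p (σ + 1) : Submodule ℤ G))
    (hy1 : y ∈ (ppow p σ : Submodule ℤ H))
    (hyprop : ∀ t ∈ LinearMap.range f.toFun, y + t ∉ (ppow p (σ + 1) : Submodule ℤ H))
    (hpy : p • y = f ⟨p • x', hpx⟩) :
    ∃ g : G →ₗ.[ℤ] H, f ≤ g ∧ (g.domain : Set G).Finite ∧ Function.Injective g.toFun ∧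
      MemPres p g ∧ x' ∈ g.domain := by
  classical
  have hyT : y ∉ LinearMap.range f.toFun := by
    intro hy'
    exact hyprop (-y) (Submodule.neg_mem _ hy')
      (by rw [add_neg_cancel]; exact Submodule.zero_mem _)
  have hnotdvd : ∀ c : ℤ, c • x' ∈ f.domain → p ∣ c := by
    intro c hc
    by_contra hc'
    obtain ⟨r, hr⟩ := exists_smul_smul_eq hp hc' (hG x')
    exact hxS (hr ▸ f.domain.smul_mem r hc)
  have Hc : ∀ c : ℤ, c • x' = 0 → c • y = 0 := by
    intro c h0
    obtain ⟨c', rfl⟩ := hnotdvd c (by rw [h0]; exact f.domain.zero_mem)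
    have h1 : (p * c') • y = c' • (p • y) := by rw [mul_comm p c', mul_smul]
    rw [h1, hpy, ← f.map_smul]
    have h2 : c' • (⟨p • x', hpx⟩ : f.domain) = 0 := by
      apply Subtype.ext
      show c' • (p • x') = 0
      rw [← mul_smul, mul_comm c' p]
      exact h0
    rw [h2, f.map_zero]
  set m := LinearPMap.mkSpanSingleton' (σ := RingHom.id ℤ) x' y Hc with hmdef
  have hagree : ∀ (u : f.domain) (v : m.domain), (u : G) = v → f u = m v := by
    intro u v huv
    have hv2 : (v : G) ∈ Submodule.span ℤ {x'} := v.2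
    obtain ⟨c, hc⟩ := Submodule.mem_span_singleton.1 hv2
    have hcd : c • x' ∈ f.domain := by rw [hc, ← huv]; exact u.2
    obtain ⟨c', hcc'⟩ := hnotdvd c hcd
    have hmv : m v = c • y := by
      have hveq : v = ⟨c • x', by rw [hc]; exact v.2⟩ := Subtype.ext hc.symm
      rw [hveq]
      exact LinearPMap.mkSpanSingleton'_apply x' y Hc c _
    rw [hmv]
    have hu' : u = (⟨c • x', hcd⟩ : f.domain) := Subtype.ext (huv.trans hc.symm)
    rw [hu']
    have h3 : (⟨c • x', hcd⟩ : f.domain) = c' • ⟨p • x', hpx⟩ := by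
      apply Subtype.ext
      show c • x' = c' • (p • x')
      rw [← mul_smul, mul_comm c' p, ← hcc']
    rw [h3, f.map_smul, ← hpy, ← mul_smul, mul_comm c' p, ← hcc']
  set g := f.sup m hagree with hgdef
  have hdom : g.domain = f.domain ⊔ Submodule.span ℤ {x'} := rfl
  have hx'g : x' ∈ g.domain := by
    rw [hdom]
    exact Submodule.mem_sup_right (Submodule.mem_span_singleton_self x')
  have hfing : (g.domain : Set G).Finite := by
    rw [hdom]
    obtain ⟨k, hk⟩ := hG x'
    exact finite_sup_span hfin hppos hk
  have hfg : f ≤ g := f.left_le_sup m hagree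
  have hdecomp : ∀ z : g.domain, ∃ (u : f.domain) (c : ℤ),
      (z : G) = u + c • x' ∧ g z = f u + c • y := by
    intro z
    have hz2 : (z : G) ∈ f.domain ⊔ Submodule.span ℤ {x'} := by rw [← hdom]; exact z.2
    obtain ⟨u0, hu0, v0, hv0, huv⟩ := Submodule.mem_sup.1 hz2
    obtain ⟨c, hc⟩ := Submodule.mem_span_singleton.1 hv0
    refine ⟨⟨u0, hu0⟩, c, by rw [← huv, ← hc], ?_⟩
    have hval : m ⟨v0, hv0⟩ = c • y := by
      have hveq : (⟨v0, hv0⟩ : m.domain) = ⟨c • x', by rw [hc]; exact hv0⟩ := Subtype.ext hc.symm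
      rw [hveq]
      exact LinearPMap.mkSpanSingleton'_apply x' y Hc c _
    rw [show g z = f ⟨u0, hu0⟩ + m ⟨v0, hv0⟩ from LinearPMap.sup_apply hagree _ _ z huv, hval]
  have hcanon : ∀ (u : f.domain) (c : ℤ) (hmemd : (u : G) + c • x' ∈ f.domain),
      f ⟨(u : G) + c • x', hmemd⟩ = f u + c • y := by
    intro u c hmemd
    have hcx : c • x' ∈ f.domain := by
      have hsm := f.domain.sub_mem hmemd u.2
      simpa using hsm
    obtain ⟨c', rfl⟩ := hnotdvd c hcx
    have hsplit : (⟨(u : G) + (p * c') • x', hmemd⟩ : f.domain) = u + c' • ⟨p • x', hpx⟩ := by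
      apply Subtype.ext
      show (u : G) + (p * c') • x' = u + c' • (p • x')
      rw [← mul_smul, mul_comm c' p]
    rw [hsplit, f.map_add, f.map_smul, ← hpy, ← mul_smul, mul_comm c' p]
  have hinjg : Function.Injective g.toFun := by
    have hker : ∀ z : g.domain, g z = 0 → z = 0 := by
      intro z h0
      obtain ⟨u, c, hzco, hzval⟩ := hdecomp z
      by_cases hdvd : p ∣ c
      · obtain ⟨c', rfl⟩ := hdvd
        have hzf : (z : G) ∈ f.domain := by
          rw [hzco, show ((p * c') • x' : G) = c' • (p • x') by rw [mul_comm p c', mul_smul]]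
          exact f.domain.add_mem u.2 (f.domain.smul_mem _ hpx)
        have hmemd : (u : G) + (p * c') • x' ∈ f.domain := by rw [← hzco]; exact hzf
        have hfz : f ⟨(z : G), hzf⟩ = 0 := by
          have hzz : (⟨(z : G), hzf⟩ : f.domain) = ⟨(u : G) + (p * c') • x', hmemd⟩ :=
            Subtype.ext hzco
          rw [hzz, hcanon u (p * c') hmemd, ← hzval]
          exact h0
        have hz00 : (⟨(z : G), hzf⟩ : f.domain) = 0 := by
          apply hinj
          show f.toFun _ = f.toFun 0
          rw [map_zero]
          exact hfz
        exact Subtype.ext (show (z : G) = 0 from congrArg Subtype.val hz00)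
      · exfalso
        rw [hzval] at h0
        have h1 := eq_neg_of_add_eq_zero_right h0
        have h2 : c • y ∈ LinearMap.range f.toFun := by
          rw [h1]
          exact Submodule.neg_mem _ ⟨u, rfl⟩
        obtain ⟨r, hr⟩ := exists_smul_smul_eq hp hdvd (hH y)
        exact hyT (hr ▸ Submodule.smul_mem _ r h2)
    intro a b hab
    have hz : a - b = 0 := hker _ (by
      show g.toFun (a - b) = 0
      rw [map_sub, hab, sub_self])
    exact sub_eq_zero.1 hz
  have hmemg : MemPres p g := by
    intro z α
    obtain ⟨u, c, hzco, hzval⟩ := hdecomp z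
    by_cases hdvd : p ∣ c
    · obtain ⟨c', rfl⟩ := hdvd
      have hzf : (z : G) ∈ f.domain := by
        rw [hzco, show ((p * c') • x' : G) = c' • (p • x') by rw [mul_comm p c', mul_smul]]
        exact f.domain.add_mem u.2 (f.domain.smul_mem _ hpx)
      have hmemd : (u : G) + (p * c') • x' ∈ f.domain := by rw [← hzco]; exact hzf
      have hval2 : g z = f ⟨(z : G), hzf⟩ := by
        rw [hzval, show (⟨(z : G), hzf⟩ : f.domain) = ⟨(u : G) + (p * c') • x', hmemd⟩ from
          Subtype.ext hzco, hcanon u (p * c') hmemd]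
      rw [hval2]
      exact hmem ⟨(z : G), hzf⟩ α
    · have hcx1 : c • x' ∈ (ppow p σ : Submodule ℤ G) := Submodule.smul_mem _ _ hx1
      have hcy1 : c • y ∈ (ppow p σ : Submodule ℤ H) := Submodule.smul_mem _ _ hy1
      have hpropx := proper_smul_aux hp (hG x') hxprop hdvd
      have hpropy := proper_smul_aux hp (hH y) hyprop hdvd
      rcases le_or_gt α σ with hle | hlt
      · have hcxα : c • x' ∈ (ppow p α : Submodule ℤ G) := ppow_anti hle hcx1
        have hcyα : c • y ∈ (ppow p α : Submodule ℤ H) := ppow_anti hle hcy1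
        constructor
        · intro hz
          rw [hzval]
          have hu : (u : G) ∈ (ppow p α : Submodule ℤ G) := by
            have hsub := Submodule.sub_mem _ hz hcxα
            rwa [show (z : G) - c • x' = (u : G) by rw [hzco]; abel] at hsub
          exact Submodule.add_mem _ ((hmem u α).1 hu) hcyα
        · intro hz
          rw [hzval] at hz
          rw [hzco]
          have hfu : f u ∈ (ppow p α : Submodule ℤ H) := by
            have hsub := Submodule.sub_mem _ hz hcyα
            rwa [show f u + c • y - c • y = f u by abel] at hsub
          exact Submodule.add_mem _ ((hmem u α).2 hfu) hcxα
      · have hsa : σ + 1 ≤ α := Order.succ_le_of_lt hlt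
        constructor
        · intro hz
          exfalso
          have hmm : c • x' + (u : G) ∈ (ppow p (σ + 1) : Submodule ℤ G) := by
            rw [show c • x' + (u : G) = (z : G) by rw [hzco]; abel]
            exact ppow_anti hsa hz
          exact hpropx (u : G) u.2 hmm
        · intro hz
          exfalso
          have hmm : c • y + f u ∈ (ppow p (σ + 1) : Submodule ℤ H) := by
            rw [show c • y + f u = g z by rw [hzval]; abel]
            exact ppow_anti hsa hz
          exact hpropy (f u) ⟨u, rfl⟩ hmm
  exact ⟨g, hfg, hfing, hinjg, hmemg, hx'g⟩

/-- The deep case: produce a matching partner `y` when `p • x'` lies two levels down. -/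
theorem case_deep (hp : Prime p) {f : G →ₗ.[ℤ] H} (hfin : (f.domain : Set G).Finite)
    (hinj : Function.Injective f.toFun) (hmem : MemPres p f) {σ : Ordinal.{u}}
    (hu : ∀ n : ℕ, ((n : Cardinal) ≤ uCard p G σ ↔ (n : Cardinal) ≤ uCard p H σ))
    {x' : G} (hpx : p • x' ∈ f.domain)
    (hx1 : x' ∈ (ppow p σ : Submodule ℤ G))
    (hxprop : ∀ s ∈ f.domain, x' + s ∉ (ppow p (σ + 1) : Submodule ℤ G))
    (hdeep : p • x' ∈ (ppow p (σ + 1 + 1) : Submodule ℤ G)) :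
    ∃ y : H, y ∈ (ppow p σ : Submodule ℤ H) ∧
      (∀ t ∈ LinearMap.range f.toFun, y + t ∉ (ppow p (σ + 1) : Submodule ℤ H)) ∧
      p • y = f ⟨p • x', hpx⟩ := by
  obtain ⟨w, hw, hww⟩ := mem_ppow_succ.1 hdeep
  set z := x' - w with hzdef
  have hz1 : z ∈ (ppow p σ : Submodule ℤ G) :=
    Submodule.sub_mem _ hx1 (ppow_succ_le σ hw)
  have hz2 : p • z = 0 := by rw [hzdef, smul_sub, hww, sub_self]
  have hz3 : z ∉ f.domain ⊔ ppow p (σ + 1) := by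
    intro hmem'
    obtain ⟨s, hs, w', hw', hsum⟩ := Submodule.mem_sup.1 hmem'
    have hxx : x' + (-s) ∈ (ppow p (σ + 1) : Submodule ℤ G) := by
      have heq : x' + (-s) = w + w' := by
        rw [show (w' : G) = z - s by rw [← hsum]; abel, hzdef]
        abel
      rw [heq]
      exact Submodule.add_mem _ hw hw'
    exact hxprop (-s) (f.domain.neg_mem hs) hxx
  obtain ⟨z', hz'1, hz'2, hz'3⟩ := exists_avoid hp f hfin hinj hmem hu hz1 hz2 hz3
  have hfpx : f ⟨p • x', hpx⟩ ∈ (ppow p (σ + 1 + 1) : Submodule ℤ H) :=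
    (hmem ⟨p • x', hpx⟩ (σ + 1 + 1)).1 hdeep
  obtain ⟨y₁, hy₁, hy₁p⟩ := mem_ppow_succ.1 hfpx
  refine ⟨z' + y₁, Submodule.add_mem _ hz'1 (ppow_succ_le σ hy₁), ?_, ?_⟩
  · intro t ht hmem2
    apply hz'3
    refine Submodule.mem_sup.2 ⟨-t, Submodule.neg_mem _ ht,
      (z' + y₁ + t) - y₁, Submodule.sub_mem _ hmem2 hy₁, ?_⟩
    abel
  · rw [smul_add, hz'2, zero_add, hy₁p]

/-- One socle step: extend to cover `x` with `p • x` already in the domain. -/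
theorem extend_socle (hp : Prime p) (hppos : 0 < p)
    (hG : ∀ g : G, ∃ k : ℕ, p ^ k • g = 0) (hH : ∀ h : H, ∃ k : ℕ, p ^ k • h = 0)
    (hGred : (⨅ α : Ordinal.{u}, (ppow p α : Submodule ℤ G)) = ⊥)
    (hu : ∀ (σ : Ordinal.{u}) (n : ℕ),
      ((n : Cardinal) ≤ uCard p G σ ↔ (n : Cardinal) ≤ uCard p H σ))
    {f : G →ₗ.[ℤ] H} (hfin : (f.domain : Set G).Finite) (hinj : Function.Injective f.toFun)
    (hmem : MemPres p f) {x : G} (hx : x ∉ f.domain) (hpx : p • x ∈ f.domain) :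
    ∃ g : G →ₗ.[ℤ] H, f ≤ g ∧ (g.domain : Set G).Finite ∧ Function.Injective g.toFun ∧
      MemPres p g ∧ x ∈ g.domain := by
  obtain ⟨s₀, σ, hs₀, ⟨hx1, hx2⟩, hprop⟩ := exists_proper_rep hGred hfin hx
  set x₁ := x + s₀ with hx₁def
  have hx₁S : x₁ ∉ f.domain := by
    intro h
    apply hx
    have hsub := f.domain.sub_mem h hs₀
    rwa [show x₁ - s₀ = x by rw [hx₁def]; abel] at hsub
  have hpx₁ : p • x₁ ∈ f.domain := by
    rw [hx₁def, smul_add]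
    exact f.domain.add_mem hpx (f.domain.smul_mem p hs₀)
  suffices hsuff : ∃ x₂ : G, x₂ - x ∈ f.domain ∧
      ∃ g : G →ₗ.[ℤ] H, f ≤ g ∧ (g.domain : Set G).Finite ∧ Function.Injective g.toFun ∧
        MemPres p g ∧ x₂ ∈ g.domain by
    obtain ⟨x₂, hd, g, hle, h1, h2, h3, hx₂⟩ := hsuff
    refine ⟨g, hle, h1, h2, h3, ?_⟩
    have hxeq : x = x₂ - (x₂ - x) := by abel
    rw [hxeq]
    exact g.domain.sub_mem hx₂ (hle.1 hd)
  by_cases hdeep : p • x₁ ∈ (ppow p (σ + 1 + 1) : Submodule ℤ G)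
  · obtain ⟨y, hy1, hyprop, hpy⟩ := case_deep hp hfin hinj hmem (hu σ) hpx₁ hx1 hprop hdeep
    obtain ⟨g, hle, h1, h2, h3, hx₁g⟩ := extend_pair hp hppos hG hH hfin hinj hmem
      hx₁S hpx₁ hx1 hprop hy1 hyprop hpy
    exact ⟨x₁, by rw [hx₁def]; simpa using hs₀, g, hle, h1, h2, h3, hx₁g⟩
  · have hpx₁pp : p • x₁ ∈ (ppow p (σ + 1) : Submodule ℤ G) := smul_mem_ppow_succ hx1
    have hfpx₁ : f ⟨p • x₁, hpx₁⟩ ∈ (ppow p (σ + 1) : Submodule ℤ H) :=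
      (hmem _ (σ + 1)).1 hpx₁pp
    obtain ⟨y₀, hy₀, hy₀p⟩ := mem_ppow_succ.1 hfpx₁
    by_cases hyprop : ∀ t ∈ LinearMap.range f.toFun, y₀ + t ∉ (ppow p (σ + 1) : Submodule ℤ H)
    · obtain ⟨g, hle, h1, h2, h3, hx₁g⟩ := extend_pair hp hppos hG hH hfin hinj hmem
        hx₁S hpx₁ hx1 hprop hy₀ hyprop hy₀p
      exact ⟨x₁, by rw [hx₁def]; simpa using hs₀, g, hle, h1, h2, h3, hx₁g⟩
    · push_neg at hyprop
      obtain ⟨t, ht, hmemt⟩ := hyprop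
      obtain ⟨uu, huu⟩ := ht
      set x₂ := x₁ + (uu : G) with hx₂def
      have hx₂S : x₂ ∉ f.domain := by
        intro h
        apply hx₁S
        have hsub := f.domain.sub_mem h uu.2
        rwa [show x₂ - (uu : G) = x₁ by rw [hx₂def]; abel] at hsub
      have hpx₂ : p • x₂ ∈ f.domain := by
        rw [hx₂def, smul_add]
        exact f.domain.add_mem hpx₁ (f.domain.smul_mem p uu.2)
      have htpp : t ∈ (ppow p σ : Submodule ℤ H) := by
        have heq : t = (y₀ + t) - y₀ := by abel
        rw [heq]
        exact Submodule.sub_mem _ (ppow_succ_le σ hmemt) hy₀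
      have huupp : (uu : G) ∈ (ppow p σ : Submodule ℤ G) := by
        refine (hmem uu σ).2 ?_
        rw [show f uu = t from huu]
        exact htpp
      have hx₂1 : x₂ ∈ (ppow p σ : Submodule ℤ G) := Submodule.add_mem _ hx1 huupp
      have hprop₂ : ∀ s ∈ f.domain, x₂ + s ∉ (ppow p (σ + 1) : Submodule ℤ G) := by
        intro s hs hc
        have hc' : x₁ + ((uu : G) + s) ∈ (ppow p (σ + 1) : Submodule ℤ G) := by
          rwa [← add_assoc]
        exact hprop _ (f.domain.add_mem uu.2 hs) hc'
      have hdeep₂ : p • x₂ ∈ (ppow p (σ + 1 + 1) : Submodule ℤ G) := by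
        have hfeq : f ⟨p • x₂, hpx₂⟩ = p • (y₀ + t) := by
          have hsplit : (⟨p • x₂, hpx₂⟩ : f.domain) = ⟨p • x₁, hpx₁⟩ + p • uu := by
            apply Subtype.ext
            show p • x₂ = p • x₁ + p • (uu : G)
            rw [hx₂def, smul_add]
          rw [hsplit, f.map_add, f.map_smul, ← hy₀p, show f uu = t from huu, smul_add]
        refine (hmem ⟨p • x₂, hpx₂⟩ (σ + 1 + 1)).2 ?_
        rw [hfeq]
        exact smul_mem_ppow_succ hmemt
      obtain ⟨y, hy1, hyprop2, hpy⟩ := case_deep hp hfin hinj hmem (hu σ) hpx₂ hx₂1 hprop₂ hdeep₂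
      obtain ⟨g, hle, h1, h2, h3, hx₂g⟩ := extend_pair hp hppos hG hH hfin hinj hmem
        hx₂S hpx₂ hx₂1 hprop₂ hy1 hyprop2 hpy
      refine ⟨x₂, ?_, g, hle, h1, h2, h3, hx₂g⟩
      rw [show x₂ - x = s₀ + (uu : G) by rw [hx₂def, hx₁def]; abel]
      exact f.domain.add_mem hs₀ uu.2

/-- Extending a good partial isomorphism to cover any element. -/
theorem extend_any (hp : Prime p) (hppos : 0 < p)
    (hG : ∀ g : G, ∃ k : ℕ, p ^ k • g = 0) (hH : ∀ h : H, ∃ k : ℕ, p ^ k • h = 0)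
    (hGred : (⨅ α : Ordinal.{u}, (ppow p α : Submodule ℤ G)) = ⊥)
    (hu : ∀ (σ : Ordinal.{u}) (n : ℕ),
      ((n : Cardinal) ≤ uCard p G σ ↔ (n : Cardinal) ≤ uCard p H σ))
    (k : ℕ) :
    ∀ (f : G →ₗ.[ℤ] H), (f.domain : Set G).Finite → Function.Injective f.toFun →
      MemPres p f → ∀ x : G, p ^ k • x ∈ f.domain →
      ∃ g : G →ₗ.[ℤ] H, f ≤ g ∧ (g.domain : Set G).Finite ∧ Function.Injective g.toFun ∧
        MemPres p g ∧ x ∈ g.domain := by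
  induction k with
  | zero =>
    intro f hfin hinj hmem x hx
    exact ⟨f, le_rfl, hfin, hinj, hmem, by simpa using hx⟩
  | succ k ih =>
    intro f hfin hinj hmem x hx
    have hx' : p ^ k • (p • x) ∈ f.domain := by
      rwa [smul_smul, ← pow_succ]
    obtain ⟨g₁, hle₁, hfin₁, hinj₁, hmem₁, hpx⟩ := ih f hfin hinj hmem (p • x) hx'
    by_cases hxg : x ∈ g₁.domain
    · exact ⟨g₁, hle₁, hfin₁, hinj₁, hmem₁, hxg⟩
    · obtain ⟨g₂, hle₂, h1, h2, h3, hxg₂⟩ :=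
        extend_socle hp hppos hG hH hGred hu hfin₁ hinj₁ hmem₁ hxg hpx
      exact ⟨g₂, le_trans hle₁ hle₂, h1, h2, h3, hxg₂⟩

/-- The backward direction: equal `û` invariants give a partial isomorphism system. -/
theorem exists_system (hp : Prime p) (hppos : 0 < p)
    (hG : ∀ g : G, ∃ k : ℕ, p ^ k • g = 0) (hH : ∀ h : H, ∃ k : ℕ, p ^ k • h = 0)
    (hGred : (⨅ α : Ordinal.{u}, (ppow p α : Submodule ℤ G)) = ⊥)
    (hHred : (⨅ α : Ordinal.{u}, (ppow p α : Submodule ℤ H)) = ⊥)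
    (hu : ∀ (σ : Ordinal.{u}) (n : ℕ),
      ((n : Cardinal) ≤ uCard p G σ ↔ (n : Cardinal) ≤ uCard p H σ)) :
    ∃ I : Set (G →ₗ.[ℤ] H), IsPIS I := by
  classical
  set I : Set (G →ₗ.[ℤ] H) :=
    {f | (f.domain : Set G).Finite ∧ Function.Injective f.toFun ∧ MemPres p f} with hI
  have hbotI : (⊥ : G →ₗ.[ℤ] H) ∈ I := by
    refine ⟨?_, ?_, ?_⟩
    · show ((⊥ : Submodule ℤ G) : Set G).Finite
      rw [Submodule.bot_coe]
      exact Set.finite_singleton 0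
    · intro a b _
      apply Subtype.ext
      rw [(Submodule.mem_bot ℤ).1 a.2, (Submodule.mem_bot ℤ).1 b.2]
    · intro a α
      have ha : (a : G) = 0 := (Submodule.mem_bot ℤ).1 a.2
      have ha' : a = 0 := Subtype.ext ha
      have hfa : (⊥ : G →ₗ.[ℤ] H) a = 0 := by rw [ha']; exact LinearPMap.map_zero _
      rw [ha, hfa]
      exact iff_of_true (Submodule.zero_mem _) (Submodule.zero_mem _)
  refine ⟨I, ⟨⊥, hbotI⟩, fun f hf => hf.2.1, ?_, ?_⟩
  · intro f hf a
    obtain ⟨k, hk⟩ := hG a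
    obtain ⟨g, hle, h1, h2, h3, hmem⟩ := extend_any hp hppos hG hH hGred hu k f hf.1 hf.2.1
      hf.2.2 a (by rw [hk]; exact f.domain.zero_mem)
    exact ⟨g, ⟨h1, h2, h3⟩, hle, hmem⟩
  · intro f hf b
    set f' := pinv f hf.2.1 with hf'def
    have hf'fin : (f'.domain : Set H).Finite := pinv_dom_finite f hf.2.1 hf.1
    have hf'inj : Function.Injective f'.toFun := pinv_injective f hf.2.1
    have hf'mem : MemPres p f' := pinv_memPres f hf.2.1 hf.2.2
    have hu' : ∀ (σ : Ordinal.{u}) (n : ℕ),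
        ((n : Cardinal) ≤ uCard p H σ ↔ (n : Cardinal) ≤ uCard p G σ) :=
      fun σ n => (hu σ n).symm
    obtain ⟨k, hk⟩ := hH b
    obtain ⟨g', hle', h1', h2', h3', hbg'⟩ := extend_any hp hppos hH hG hHred hu' k f'
      hf'fin hf'inj hf'mem b (by rw [hk]; exact f'.domain.zero_mem)
    set g := pinv g' h2' with hgdef
    have hgI : g ∈ I := by
      refine ⟨?_, pinv_injective g' h2', pinv_memPres g' h2' h3'⟩
      exact range_finite g' h1'
    have hfg : f ≤ g := by
      have hfmem' : ∀ a : f.domain, f a ∈ f'.domain := fun a =>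
        LinearMap.mem_range.2 ⟨a, rfl⟩
      constructor
      · intro a ha
        refine ⟨⟨f ⟨a, ha⟩, hle'.1 (hfmem' ⟨a, ha⟩)⟩, ?_⟩
        show g' _ = a
        have h4 : g' ⟨f ⟨a, ha⟩, hle'.1 (hfmem' ⟨a, ha⟩)⟩ =
            f' ⟨f ⟨a, ha⟩, hfmem' ⟨a, ha⟩⟩ := (hle'.2 rfl).symm
        rw [h4]
        exact pinv_eq f hf.2.1 _ ⟨a, ha⟩ rfl
      · intro u z huz
        have hmemc : (f u : H) ∈ g'.domain := hle'.1 (hfmem' u)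
        refine (pinv_eq g' h2' z ⟨f u, hmemc⟩ ?_).symm
        have h4 : g' ⟨f u, hmemc⟩ = f' ⟨f u, hfmem' u⟩ := (hle'.2 rfl).symm
        rw [h4, pinv_eq f hf.2.1 _ u rfl]
        exact huz
    refine ⟨g, hgI, hfg, ?_⟩
    refine ⟨⟨g' ⟨b, hbg'⟩, LinearMap.mem_range.2 ⟨⟨b, hbg'⟩, rfl⟩⟩, ?_⟩
    exact pinv_eq g' h2' _ ⟨b, hbg'⟩ rfl

end Backward
end BE

end UlmW

universe u

open UlmW

theorem statement_17 (q : ℕ) (hq : q.Prime) {G H : Type u} [AddCommGroup G]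
    [AddCommGroup H]
    (hGp : ∀ g : G, ∃ k : ℕ, (q : ℤ) ^ k • g = 0)
    (hHp : ∀ h : H, ∃ k : ℕ, (q : ℤ) ^ k • h = 0)
    (hGred : (⨅ α : Ordinal.{u}, (ppow ((q : ℤ)) α : Submodule ℤ G)) = ⊥)
    (hHred : (⨅ α : Ordinal.{u}, (ppow ((q : ℤ)) α : Submodule ℤ H)) = ⊥) :
    (∃ I : Set (G →ₗ.[ℤ] H), IsPartialIsoSystem I) ↔
      ∀ α : Ordinal.{u}, uHat (q : ℤ) G α = uHat (q : ℤ) H α := by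
  have hp : Prime ((q : ℕ) : ℤ) := Nat.prime_iff_prime_int.1 hq
  constructor
  · rintro ⟨I, hI⟩ α
    refine UlmW.BE.uHat_eq_of_system hp I ?_ α
    exact hI
  · intro hU
    have hu : ∀ (σ : Ordinal.{u}) (n : ℕ),
        ((n : Cardinal) ≤ uCard (q : ℤ) G σ ↔ (n : Cardinal) ≤ uCard (q : ℤ) H σ) :=
      fun σ n => UlmW.BE.nat_le_congr_of_min_eq (hU σ) n
    obtain ⟨I, hI⟩ := UlmW.BE.exists_system hp (by exact_mod_cast hq.pos) hGp hHp hGred hHred hu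
    exact ⟨I, hI⟩

end
end
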